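/- arXiv:0802.2481 — 5 statements merged into one kernel-verified Lean document; each statement's English description precedes it below -/
import Mathlib

section
/- The complex vector space of homogeneous polynomials of degree 6 in ℂ[z₀,z₁,z₂] that are invariant both under the substitution d (f(λz₀,λ²z₁,λ⁴z₂) = f) and under the cyclic substitution τ (f(z₂,z₀,z₁) = f) is exactly the two-dimensional linear span of P₁ = z₀²z₁²z₂² and P₂ = z₀⁵z₁ + z₂⁵z₀ + z₁⁵z₂. -/
open MvPolynomial

noncomputable def lam : ℂ := Complex.exp (2 * Real.pi * Complex.I / 7)

/-- The substitution `d : (z₀, z₁, z₂) ↦ (λz₀, λ²z₁, λ⁴z₂)` acting on polynomials. -/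
noncomputable def dSub : MvPolynomial (Fin 3) ℂ →ₐ[ℂ] MvPolynomial (Fin 3) ℂ :=
  aeval ![C lam * X 0, C (lam ^ 2) * X 1, C (lam ^ 4) * X 2]

/-- The cyclic substitution `τ : (z₀, z₁, z₂) ↦ (z₂, z₀, z₁)` acting on polynomials. -/
noncomputable def tauSub : MvPolynomial (Fin 3) ℂ →ₐ[ℂ] MvPolynomial (Fin 3) ℂ :=
  aeval ![X 2, X 0, X 1]

noncomputable def P₁ : MvPolynomial (Fin 3) ℂ := X 0 ^ 2 * X 1 ^ 2 * X 2 ^ 2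

noncomputable def P₂ : MvPolynomial (Fin 3) ℂ :=
  X 0 ^ 5 * X 1 + X 2 ^ 5 * X 0 + X 1 ^ 5 * X 2

lemma lam_prim : IsPrimitiveRoot lam 7 := by
  have := Complex.isPrimitiveRoot_exp 7 (by norm_num)
  simpa [lam] using this

lemma lam_pow7 : lam ^ 7 = 1 := lam_prim.pow_eq_one

def wgt (m : Fin 3 →₀ ℕ) : ℕ := m 0 + 2 * m 1 + 4 * m 2

noncomputable def e3 (a b c : ℕ) : Fin 3 →₀ ℕ :=
  Finsupp.single 0 a + Finsupp.single 1 b + Finsupp.single 2 c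

lemma e3_apply0 (a b c : ℕ) : e3 a b c 0 = a := by simp [e3, Finsupp.single_apply]
lemma e3_apply1 (a b c : ℕ) : e3 a b c 1 = b := by simp [e3, Finsupp.single_apply]
lemma e3_apply2 (a b c : ℕ) : e3 a b c 2 = c := by simp [e3, Finsupp.single_apply]

lemma e3_repr (m : Fin 3 →₀ ℕ) : m = e3 (m 0) (m 1) (m 2) := by
  ext i
  fin_cases i <;> simp [e3, Finsupp.single_apply]

lemma e3_inj {a b c a' b' c' : ℕ} (h : e3 a b c = e3 a' b' c') :
    a = a' ∧ b = b' ∧ c = c' := by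
  refine ⟨?_, ?_, ?_⟩
  · have := congrArg (fun m => m 0) h; simpa [e3_apply0] using this
  · have := congrArg (fun m => m 1) h; simpa [e3_apply1] using this
  · have := congrArg (fun m => m 2) h; simpa [e3_apply2] using this

lemma e3_degree (a b c : ℕ) : (e3 a b c).degree = a + b + c := by
  have : (e3 a b c).degree = ∑ i : Fin 3, e3 a b c i := by
    rw [Finsupp.degree]
    exact Finset.sum_subset (Finset.subset_univ _)
      (by intro x _ hx; simpa [Finsupp.mem_support_iff] using hx)
  rw [this, Fin.sum_univ_three, e3_apply0, e3_apply1, e3_apply2]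

lemma monomial_e3 (a b c : ℕ) :
    (monomial (e3 a b c) (1:ℂ)) = X 0 ^ a * X 1 ^ b * X 2 ^ c := by
  simp [e3, X_pow_eq_monomial, monomial_mul]

lemma dSub_monomial (m : Fin 3 →₀ ℕ) (c : ℂ) :
    dSub (monomial m c) = C (lam ^ wgt m) * monomial m c := by
  rw [dSub, aeval_monomial, monomial_eq, Finsupp.prod_pow, Finsupp.prod_pow,
    Fin.prod_univ_three, Fin.prod_univ_three]
  simp only [Matrix.cons_val_zero, Matrix.cons_val_one, Matrix.head_cons,
    Matrix.cons_val_two, Matrix.tail_cons, mul_pow, ← C_pow, ← pow_mul, wgt]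
  rw [algebraMap_eq, pow_add, pow_add, C_mul, C_mul]
  ring

lemma coeff_dSub (f : MvPolynomial (Fin 3) ℂ) (m : Fin 3 →₀ ℕ) :
    coeff m (dSub f) = lam ^ wgt m * coeff m f := by
  conv_lhs => rw [f.as_sum, map_sum]
  simp_rw [dSub_monomial, C_mul_monomial, coeff_sum, coeff_monomial]
  rw [Finset.sum_ite_eq' f.support m (fun m' => lam ^ wgt m' * coeff m' f)]
  by_cases h : m ∈ f.support
  · rw [if_pos h]
  · rw [if_neg h, MvPolynomial.notMem_support_iff.mp h, mul_zero]

def cyc : Fin 3 → Fin 3 := ![2, 0, 1]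

lemma cyc_inj : Function.Injective cyc := by decide

lemma tauSub_eq_rename : tauSub = (rename cyc : MvPolynomial (Fin 3) ℂ →ₐ[ℂ] _) := by
  apply MvPolynomial.algHom_ext
  intro i
  fin_cases i <;> simp [tauSub, cyc, rename_X]

lemma mapDomain_cyc (a b c : ℕ) :
    Finsupp.mapDomain cyc (e3 a b c) = e3 b c a := by
  simp only [e3, Finsupp.mapDomain_add, Finsupp.mapDomain_single]
  show Finsupp.single 2 a + Finsupp.single 0 b + Finsupp.single 1 c = _
  abel

lemma coeff_tauSub (f : MvPolynomial (Fin 3) ℂ) (a b c : ℕ) :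
    coeff (e3 b c a) (tauSub f) = coeff (e3 a b c) f := by
  rw [tauSub_eq_rename, ← mapDomain_cyc]
  exact coeff_rename_mapDomain cyc cyc_inj f _

lemma wgt_e3 (a b c : ℕ) : wgt (e3 a b c) = a + 2 * b + 4 * c := by
  simp [wgt, e3_apply0, e3_apply1, e3_apply2]

lemma e3_eq_iff {a b c a' b' c' : ℕ} :
    e3 a b c = e3 a' b' c' ↔ a = a' ∧ b = b' ∧ c = c' :=
  ⟨e3_inj, by rintro ⟨rfl, rfl, rfl⟩; rfl⟩

lemma P₁_eq : P₁ = monomial (e3 2 2 2) 1 := by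
  rw [monomial_e3]; rfl

lemma P₂_eq : P₂ = monomial (e3 5 1 0) 1 + monomial (e3 1 0 5) 1 + monomial (e3 0 5 1) 1 := by
  rw [monomial_e3, monomial_e3, monomial_e3, P₂]
  ring

lemma P₁_hom : P₁.IsHomogeneous 6 := by
  rw [P₁_eq]; exact isHomogeneous_monomial _ (by rw [e3_degree])

lemma P₂_hom : P₂.IsHomogeneous 6 := by
  rw [P₂_eq]
  exact IsHomogeneous.add (IsHomogeneous.add
    (isHomogeneous_monomial _ (by rw [e3_degree]))
    (isHomogeneous_monomial _ (by rw [e3_degree])))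
    (isHomogeneous_monomial _ (by rw [e3_degree]))

lemma dSub_P₁ : dSub P₁ = P₁ := by
  rw [P₁_eq, dSub_monomial, wgt_e3]
  norm_num
  rw [show (14:ℕ) = 7 * 2 from rfl, pow_mul, ← C_pow, lam_pow7, C_1, one_pow]

lemma dSub_P₂ : dSub P₂ = P₂ := by
  rw [P₂_eq, map_add, map_add, dSub_monomial, dSub_monomial, dSub_monomial,
    wgt_e3, wgt_e3, wgt_e3]
  norm_num
  rw [show (14:ℕ) = 7 * 2 from rfl, show (21:ℕ) = 7 * 3 from rfl, pow_mul, pow_mul,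
    ← C_pow, lam_pow7, C_1, one_pow, one_pow]
  norm_num

lemma tauSub_monomial (a b c : ℕ) (x : ℂ) :
    tauSub (monomial (e3 a b c) x) = monomial (e3 b c a) x := by
  rw [tauSub_eq_rename, rename_monomial, mapDomain_cyc]

lemma tauSub_P₁ : tauSub P₁ = P₁ := by
  rw [P₁_eq, tauSub_monomial]

lemma tauSub_P₂ : tauSub P₂ = P₂ := by
  rw [P₂_eq, map_add, map_add, tauSub_monomial, tauSub_monomial, tauSub_monomial]
  ring

lemma sol_cases {x y z : ℕ} (h6 : x + y + z = 6) (h7 : (x + 2*y + 4*z) % 7 = 0) :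
    (x = 2 ∧ y = 2 ∧ z = 2) ∨ (x = 5 ∧ y = 1 ∧ z = 0) ∨ (x = 1 ∧ y = 0 ∧ z = 5) ∨
      (x = 0 ∧ y = 5 ∧ z = 1) := by
  have hy : y ≤ 6 := by omega
  have hz : z ≤ 6 := by omega
  interval_cases y <;> interval_cases z <;> omega

lemma key_repr (f : MvPolynomial (Fin 3) ℂ) (hh : f.IsHomogeneous 6)
    (hd : dSub f = f) (ht : tauSub f = f) :
    f = coeff (e3 2 2 2) f • P₁ + coeff (e3 5 1 0) f • P₂ := by
  have hB1 : coeff (e3 1 0 5) f = coeff (e3 5 1 0) f := by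
    conv_lhs => rw [← ht]
    exact coeff_tauSub f 5 1 0
  have hB2 : coeff (e3 0 5 1) f = coeff (e3 1 0 5) f := by
    conv_lhs => rw [← ht]
    exact coeff_tauSub f 1 0 5
  ext m
  obtain ⟨x, y, z, rfl⟩ : ∃ x y z, m = e3 x y z := ⟨_, _, _, e3_repr m⟩
  rw [coeff_add, coeff_smul, coeff_smul, P₁_eq, P₂_eq, coeff_add, coeff_add,
    coeff_monomial, coeff_monomial, coeff_monomial, coeff_monomial]
  by_cases h6 : x + y + z = 6
  · by_cases h7 : (x + 2*y + 4*z) % 7 = 0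
    · rcases sol_cases h6 h7 with ⟨rfl,rfl,rfl⟩|⟨rfl,rfl,rfl⟩|⟨rfl,rfl,rfl⟩|⟨rfl,rfl,rfl⟩ <;>
        simp [e3_eq_iff, hB1, hB2]
    · have hw := coeff_dSub f (e3 x y z)
      rw [hd, wgt_e3] at hw
      have hne : lam ^ (x + 2*y + 4*z) ≠ 1 := by
        intro h1
        have := (lam_prim.pow_eq_one_iff_dvd _).mp h1
        omega
      have hz : coeff (e3 x y z) f = 0 := by
        by_contra hc
        exact hne (mul_right_cancel₀ hc (by rw [← hw, one_mul]))
      rw [hz, if_neg (fun h => by obtain ⟨h1,h2,h3⟩ := e3_inj h; omega),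
        if_neg (fun h => by obtain ⟨h1,h2,h3⟩ := e3_inj h; omega),
        if_neg (fun h => by obtain ⟨h1,h2,h3⟩ := e3_inj h; omega),
        if_neg (fun h => by obtain ⟨h1,h2,h3⟩ := e3_inj h; omega)]
      simp
  · have hz : coeff (e3 x y z) f = 0 := hh.coeff_eq_zero (by rw [e3_degree]; omega)
    rw [hz, if_neg (fun h => by obtain ⟨h1,h2,h3⟩ := e3_inj h; omega),
      if_neg (fun h => by obtain ⟨h1,h2,h3⟩ := e3_inj h; omega),
      if_neg (fun h => by obtain ⟨h1,h2,h3⟩ := e3_inj h; omega),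
      if_neg (fun h => by obtain ⟨h1,h2,h3⟩ := e3_inj h; omega)]
    simp

/-- The space of homogeneous polynomials of degree 6 in ℂ[z₀,z₁,z₂] invariant under both
`d` and `τ` is exactly the two-dimensional span of `P₁ = z₀²z₁²z₂²` and
`P₂ = z₀⁵z₁ + z₂⁵z₀ + z₁⁵z₂`. -/
theorem degree_six_H_invariants :
    {f : MvPolynomial (Fin 3) ℂ | f.IsHomogeneous 6 ∧ dSub f = f ∧ tauSub f = f} =
      (Submodule.span ℂ ({P₁, P₂} : Set (MvPolynomial (Fin 3) ℂ)) :
        Set (MvPolynomial (Fin 3) ℂ)) ∧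
    Module.finrank ℂ (Submodule.span ℂ ({P₁, P₂} : Set (MvPolynomial (Fin 3) ℂ))) = 2 := by
  constructor
  · ext f
    simp only [Set.mem_setOf_eq, SetLike.mem_coe]
    constructor
    · rintro ⟨hh, hd, ht⟩
      rw [key_repr f hh hd ht]
      exact Submodule.add_mem _
        (Submodule.smul_mem _ _ (Submodule.subset_span (by simp)))
        (Submodule.smul_mem _ _ (Submodule.subset_span (by simp)))
    · intro hf
      obtain ⟨a, b, rfl⟩ := Submodule.mem_span_pair.mp hf
      refine ⟨?_, ?_, ?_⟩
      · have hmem : a • P₁ + b • P₂ ∈ homogeneousSubmodule (Fin 3) ℂ 6 :=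
          Submodule.add_mem _
            (Submodule.smul_mem _ _ ((mem_homogeneousSubmodule _ _).mpr P₁_hom))
            (Submodule.smul_mem _ _ ((mem_homogeneousSubmodule _ _).mpr P₂_hom))
        exact (mem_homogeneousSubmodule _ _).mp hmem
      · rw [map_add, map_smul, map_smul, dSub_P₁, dSub_P₂]
      · rw [map_add, map_smul, map_smul, tauSub_P₁, tauSub_P₂]
  · have hr : Set.range ![P₁, P₂] = ({P₁, P₂} : Set (MvPolynomial (Fin 3) ℂ)) := by
      ext p
      simp [Fin.exists_fin_two, or_comm]
    have hli : LinearIndependent ℂ ![P₁, P₂] := by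
      rw [LinearIndependent.pair_iff]
      intro s t hst
      have h1 := congrArg (coeff (e3 2 2 2)) hst
      have h2 := congrArg (coeff (e3 5 1 0)) hst
      simp [coeff_add, coeff_smul, P₁_eq, P₂_eq, coeff_monomial, e3_eq_iff] at h1 h2
      exact ⟨h1, h2⟩
    rw [← hr, finrank_span_eq_card hli]
    simp
end

section
/- The polynomial 3·z₀²z₁²z₂² − (z₀⁵z₁ + z₂⁵z₀ + z₁⁵z₂) is irreducible in the polynomial ring ℂ[z₀,z₁,z₂]. -/
open MvPolynomial

noncomputable abbrev R2 := MvPolynomial (Fin 2) ℂ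

lemma notdvd (i j : Fin 2) (h : j ≠ i) : ¬ (X i : R2) ∣ X j := by
  intro hd
  have := map_dvd (eval (fun k => if k = i then (0:ℂ) else 1)) hd
  simp [eval_X, h] at this

lemma primeX (i : Fin 2) : Prime (X i : R2) := by
  rw [← MulEquiv.prime_iff ((renameEquiv ℂ (Equiv.swap i 0)).trans (finSuccEquiv ℂ 1)).toRingEquiv.toMulEquiv]
  have : ((renameEquiv ℂ (Equiv.swap i 0)).trans (finSuccEquiv ℂ 1)).toRingEquiv.toMulEquiv (X i)
      = Polynomial.X := by
    simp [renameEquiv_apply, Equiv.swap_apply_left, finSuccEquiv_X_zero]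
  rw [this]; exact Polynomial.prime_X

noncomputable def fpoly : Polynomial R2 :=
  Polynomial.C (3 * X 0 ^ 2 * X 1 ^ 2) * Polynomial.X ^ 2 -
    (Polynomial.C (X 0) * Polynomial.X ^ 5 + Polynomial.C (X 1 ^ 5) * Polynomial.X +
      Polynomial.C (X 0 ^ 5 * X 1))

lemma fpoly_coeff (n : ℕ) : fpoly.coeff n =
    (if n = 2 then 3 * X 0 ^ 2 * X 1 ^ 2 else 0) -
      ((if n = 5 then X 0 else 0) + (if 1 = n then X 1 ^ 5 else 0) +
        (if n = 0 then X 0 ^ 5 * X 1 else 0)) := by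
  simp only [fpoly, Polynomial.coeff_sub, Polynomial.coeff_add, Polynomial.coeff_C_mul,
    Polynomial.coeff_X_pow, Polynomial.coeff_X, Polynomial.coeff_C, mul_ite, mul_one, mul_zero]

lemma fpoly_natDegree : fpoly.natDegree = 5 := by
  unfold fpoly
  compute_degree!

lemma fpoly_eisenstein : fpoly.IsEisensteinAt (Ideal.span {X 1}) := by
  constructor
  · rw [Polynomial.leadingCoeff, fpoly_natDegree, fpoly_coeff]
    norm_num
    rw [Ideal.mem_span_singleton]
    intro hd
    exact notdvd 1 0 (by decide) hd
  · intro n hn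
    rw [fpoly_natDegree] at hn
    rw [fpoly_coeff]
    interval_cases n <;> norm_num <;> rw [Ideal.mem_span_singleton]
    · exact ⟨X 0 ^ 5, by ring⟩
    · exact ⟨X 1 ^ 4, by ring⟩
    · exact ⟨3 * X 0 ^ 2 * X 1, by ring⟩
  · rw [fpoly_coeff]
    norm_num
    rw [Ideal.span_singleton_pow, Ideal.mem_span_singleton]
    intro hd
    obtain ⟨c, hc⟩ := hd
    have hx1 : (X 1 : R2) ≠ 0 := X_ne_zero 1
    have h5 : (X 1 : R2) ∣ X 0 ^ 5 := by
      refine ⟨c, ?_⟩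
      have : (X 1 : R2) * (X 0 ^ 5) = X 1 * (X 1 * c) := by
        calc (X 1 : R2) * X 0 ^ 5 = X 0 ^ 5 * X 1 := by ring
        _ = X 1 ^ 2 * c := hc
        _ = X 1 * (X 1 * c) := by ring
      exact mul_left_cancel₀ hx1 this
    exact notdvd 1 0 (by decide) ((primeX 1).dvd_of_dvd_pow h5)

lemma fpoly_primitive : fpoly.IsPrimitive := by
  intro r hr
  rw [Polynomial.C_dvd_iff_dvd_coeff] at hr
  have h5 : r ∣ X 0 := by
    have := hr 5; rw [fpoly_coeff] at this; norm_num at this; exact this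
  have h1 : r ∣ X 1 ^ 5 := by
    have := hr 1; rw [fpoly_coeff] at this; norm_num at this; exact this
  obtain ⟨c, hc⟩ := h5
  rcases (primeX 0).irreducible.isUnit_or_isUnit hc with hu | hu
  · exact hu
  · exfalso
    have hdx : (X 0 : R2) ∣ X 1 ^ 5 := by
      obtain ⟨u, hu'⟩ := hu.exists_right_inv
      refine dvd_trans ⟨u, ?_⟩ h1
      rw [hc]
      rw [mul_assoc, hu', mul_one]
    exact notdvd 0 1 (by decide) ((primeX 0).dvd_of_dvd_pow hdx)

lemma fpoly_irreducible : Irreducible fpoly :=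
  fpoly_eisenstein.irreducible
    (Ideal.span_singleton_prime (X_ne_zero 1) |>.mpr (primeX 1))
    fpoly_primitive (by rw [fpoly_natDegree]; norm_num)

/-- The polynomial `3·z₀²z₁²z₂² − (z₀⁵z₁ + z₂⁵z₀ + z₁⁵z₂)` is irreducible in ℂ[z₀,z₁,z₂]. -/
theorem Fsing_irreducible :
    Irreducible
      (3 * (X 0 ^ 2 * X 1 ^ 2 * X 2 ^ 2) - (X 0 ^ 5 * X 1 + X 2 ^ 5 * X 0 + X 1 ^ 5 * X 2) :
        MvPolynomial (Fin 3) ℂ) := by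
  have key : (finSuccEquiv ℂ 2)
      (3 * (X 0 ^ 2 * X 1 ^ 2 * X 2 ^ 2) - (X 0 ^ 5 * X 1 + X 2 ^ 5 * X 0 + X 1 ^ 5 * X 2)
        : MvPolynomial (Fin 3) ℂ) = fpoly := by
    have h1 : (1 : Fin 3) = (0 : Fin 2).succ := rfl
    have h2 : (2 : Fin 3) = (1 : Fin 2).succ := rfl
    rw [fpoly]
    simp only [map_sub, map_add, map_mul, map_pow, map_ofNat, h1, h2,
      finSuccEquiv_X_zero, finSuccEquiv_X_succ]
    ring
  rw [← MulEquiv.irreducible_iff (finSuccEquiv ℂ 2).toRingEquiv.toMulEquiv]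
  show Irreducible ((finSuccEquiv ℂ 2) _)
  rw [key]
  exact fpoly_irreducible
end

section
/- There is no injective group homomorphism from a nonabelian group of order 21 into PGL(2,ℂ) = GL(2,ℂ)/center; equivalently, a nonabelian group of order 21 admits no effective action on ℙ¹(ℂ) by projective transformations. -/
/-- PGL(2,ℂ): the quotient of GL(2,ℂ) by its center. -/
abbrev PGL2C :=
  Matrix.GeneralLinearGroup (Fin 2) ℂ ⧸ Subgroup.center (Matrix.GeneralLinearGroup (Fin 2) ℂ)


private lemma eq_of_pow15 (a b : ℂ) (ha : a ^ 7 = 1) (hb : b ^ 7 = 1)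
    (m : ℕ) (hm : m = 3 ∨ m = 5) (h : a ^ m = b ^ m) : a = b := by
  have h15 : a ^ 15 = b ^ 15 := by
    rcases hm with rfl | rfl
    · rw [show (15:ℕ) = 3 * 5 from rfl, pow_mul, pow_mul, h]
    · rw [show (15:ℕ) = 5 * 3 from rfl, pow_mul, pow_mul, h]
  calc a = (a ^ 7) ^ 2 * a := by rw [ha]; ring
    _ = a ^ 15 := by ring
    _ = b ^ 15 := h15
    _ = (b ^ 7) ^ 2 * b := by ring
    _ = b := by rw [hb]; ring

private lemma scalar_contradiction (k : ℕ) (hk : k = 2 ∨ k = 4) (a b l : ℂ)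
    (ha : a ^ 7 = 1) (hb : b ^ 7 = 1) (hl : l ^ 7 = 1) (hne : a ≠ b)
    (hsum : l * (a ^ k + b ^ k) = a + b) (hprod : l ^ 2 * (a * b) ^ k = a * b) : False := by
  have ha0 : a ≠ 0 := fun h => by simp [h] at ha
  have hb0 : b ≠ 0 := fun h => by simp [h] at hb
  have hl0 : l ≠ 0 := fun h => by simp [h] at hl
  have h0 : (a - l * a ^ k) * (a - l * b ^ k) = 0 := by
    rcases hk with rfl | rfl <;> linear_combination (-a) * hsum + hprod
  rcases mul_eq_zero.mp h0 with h1 | h1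
  · have hA : l * a ^ k = a := by linear_combination -h1
    have hB : l * b ^ k = b := by
      apply mul_left_cancel₀ ha0
      rcases hk with rfl | rfl
      · linear_combination hprod + l * b ^ 2 * h1
      · linear_combination hprod + l * b ^ 4 * h1
    have h2 : a ^ k * b = b ^ k * a := by
      apply mul_left_cancel₀ hl0
      linear_combination b * hA - a * hB
    rcases hk with rfl | rfl
    · exact hne (mul_left_cancel₀ (mul_ne_zero ha0 hb0) (show a*b*a = a*b*b by linear_combination h2))
    · have h3 : a ^ 3 = b ^ 3 := by
        apply mul_left_cancel₀ (mul_ne_zero ha0 hb0)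
        linear_combination h2
      exact hne (eq_of_pow15 a b ha hb 3 (Or.inl rfl) h3)
  · have hA : l * b ^ k = a := by linear_combination -h1
    have hB : l * a ^ k = b := by
      apply mul_left_cancel₀ ha0
      rcases hk with rfl | rfl
      · linear_combination hprod + l * a ^ 2 * h1
      · linear_combination hprod + l * a ^ 4 * h1
    have h2 : a ^ (k+1) = b ^ (k+1) := by
      apply mul_left_cancel₀ hl0
      rcases hk with rfl | rfl <;> linear_combination a * hB - b * hA
    rcases hk with rfl | rfl
    · exact hne (eq_of_pow15 a b ha hb 3 (Or.inl rfl) h2)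
    · exact hne (eq_of_pow15 a b ha hb 5 (Or.inr rfl) h2)

private lemma poly_contra (t d l : ℂ)
    (hP : t^6 - 5*t^4*d + 6*t^2*d^2 - d^3 = 0)
    (hQ : d * (t^5 - 4*t^3*d + 3*t*d^2) = -1)
    (hl : l ^ 7 = 1)
    (h : (l * (t^2 - 2*d) = t ∧ l^2 * d^2 = d) ∨
         (l * (t^4 - 4*t^2*d + 2*d^2) = t ∧ l^2 * d^4 = d)) : False := by
  obtain ⟨s, hs⟩ := IsAlgClosed.exists_pow_nat_eq (k := ℂ) (t^2 - 4*d) two_pos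
  by_cases hs0 : s = 0
  · subst hs0
    have hd : d = t^2/4 := by linear_combination (1/4 : ℂ) * hs
    subst hd
    have ht6 : t^6 = 0 := by linear_combination (64/7 : ℂ) * hP
    have ht : t = 0 := by
      exact pow_eq_zero_iff (by norm_num) |>.mp ht6
    subst ht
    norm_num at hQ
  · set a := (t + s)/2 with hadef
    set b := (t - s)/2 with hbdef
    have ht' : a + b = t := by rw [hadef, hbdef]; ring
    have hd' : a * b = d := by rw [hadef, hbdef]; linear_combination (-1/4 : ℂ) * hs
    have hne : a ≠ b := fun h => hs0 (by
      rw [hadef, hbdef] at h; linear_combination h)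
    rw [← ht', ← hd'] at hP hQ h
    have hab7 : a ^ 7 = b ^ 7 := by linear_combination (a - b) * hP
    have key : a^7*b - a*b^7 = b - a := by linear_combination (a - b) * hQ
    have h0 : (a^7 - 1) * (b - a) = 0 := by linear_combination key + (-a) * hab7
    have ha7 : a ^ 7 = 1 := by
      rcases mul_eq_zero.mp h0 with h1 | h1
      · linear_combination h1
      · exact absurd (by linear_combination h1 : b = a) hne.symm
    have hb7 : b ^ 7 = 1 := by rw [← hab7]; exact ha7
    rcases h with ⟨htr, hdet⟩ | ⟨htr, hdet⟩
    · exact scalar_contradiction 2 (Or.inl rfl) a b l ha7 hb7 hl hne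
        (by linear_combination htr) (by linear_combination hdet)
    · exact scalar_contradiction 4 (Or.inr rfl) a b l ha7 hb7 hl hne
        (by linear_combination htr) (by linear_combination hdet)
private lemma fin2_cayley (A : Matrix (Fin 2) (Fin 2) ℂ) :
    A * A = A.trace • A - A.det • 1 := by
  ext i j
  fin_cases i <;> fin_cases j <;>
    simp [Matrix.mul_apply, Fin.sum_univ_two, Matrix.trace_fin_two, Matrix.det_fin_two,
      Matrix.one_apply] <;> ring

private lemma step_pow {A : Matrix (Fin 2) (Fin 2) ℂ} {t d p q : ℂ} {n : ℕ}
    (hch : A * A = t • A - d • 1) (h : A ^ n = p • A - q • 1) :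
    A ^ (n+1) = (p*t - q) • A - (p*d) • 1 := by
  rw [pow_succ, h, sub_mul, smul_mul_assoc, smul_mul_assoc, one_mul, hch]
  module

private lemma matrix_contra (A B Bi : Matrix (Fin 2) (Fin 2) ℂ)
    (hBi : B * Bi = 1) (hiB : Bi * B = 1) (l : ℂ) (k : ℕ) (hk : k = 2 ∨ k = 4)
    (hA7 : A ^ 7 = 1) (hns : ∀ c : ℂ, A ≠ c • 1)
    (hrel : B * A * Bi = l • A ^ k) : False := by
  have hconj : ∀ n : ℕ, (B * A * Bi) ^ n = B * A ^ n * Bi := by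
    intro n; induction n with
    | zero => simpa using hBi.symm
    | succ n ih =>
        rw [pow_succ, ih, pow_succ]
        calc B * A ^ n * Bi * (B * A * Bi) = B * (A ^ n * ((Bi * B) * (A * Bi))) := by
              simp only [mul_assoc]
          _ = B * (A ^ n * A) * Bi := by rw [hiB]; simp only [mul_assoc, one_mul]
  have hl7 : l ^ 7 = 1 := by
    have h1 : (l • A ^ k) ^ 7 = l ^ 7 • (1 : Matrix (Fin 2) (Fin 2) ℂ) := by
      rw [smul_pow, ← pow_mul, mul_comm k 7, pow_mul, hA7, one_pow]
    have h3 : l ^ 7 • (1 : Matrix (Fin 2) (Fin 2) ℂ) = 1 := by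
      rw [← h1, ← hrel, hconj 7, hA7, mul_one, hBi]
    have h4 := congrArg Matrix.trace h3
    simp [Matrix.trace_smul, Matrix.trace_one] at h4
    linear_combination h4
  have hch := fin2_cayley A
  have e2 : A ^ 2 = A.trace • A - A.det • 1 := by rw [pow_two]; exact hch
  have e3 : A ^ 3 = _ := step_pow hch e2
  have e4 : A ^ 4 = _ := step_pow hch e3
  have e5 : A ^ 5 = _ := step_pow hch e4
  have e6 : A ^ 6 = _ := step_pow hch e5
  have e7 : A ^ 7 = _ := step_pow hch e6
  have key : ∀ p q : ℂ, A ^ 7 = p • A - q • 1 → p = 0 ∧ q = -1 := by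
    intro p q h
    rw [hA7] at h
    have hp : p = 0 := by
      by_contra hp0
      apply hns (p⁻¹ * (1 + q))
      have h2 : p • A = (1 + q) • 1 := by
        rw [add_smul, one_smul]; exact sub_eq_iff_eq_add.mp h.symm
      calc A = p⁻¹ • (p • A) := (inv_smul_smul₀ hp0 A).symm
        _ = p⁻¹ • ((1+q) • 1) := by rw [h2]
        _ = (p⁻¹ * (1+q)) • (1 : Matrix (Fin 2) (Fin 2) ℂ) := smul_smul _ _ _
    refine ⟨hp, ?_⟩
    have h4 := congrArg Matrix.trace h
    rw [hp] at h4
    simp [Matrix.trace_smul, Matrix.trace_sub, Matrix.trace_one] at h4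
    linear_combination h4/2
  obtain ⟨hp7, hq7⟩ := key _ _ e7
  have hP : A.trace^6 - 5*A.trace^4*A.det + 6*A.trace^2*A.det^2 - A.det^3 = 0 := by
    linear_combination hp7
  have hQ : A.det * (A.trace^5 - 4*A.trace^3*A.det + 3*A.trace*A.det^2) = -1 := by
    linear_combination hq7
  have htA : (B * A * Bi).trace = A.trace := by
    rw [Matrix.trace_mul_comm, ← mul_assoc, hiB, one_mul]
  have hdA : (B * A * Bi).det = A.det := by
    rw [Matrix.det_mul, Matrix.det_mul]
    have hbd : B.det * Bi.det = 1 := by rw [← Matrix.det_mul, hBi, Matrix.det_one]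
    calc B.det * A.det * Bi.det = (B.det * Bi.det) * A.det := by ring
      _ = A.det := by rw [hbd, one_mul]
  have htr : l * (A ^ k).trace = A.trace := by
    rw [← htA, hrel, Matrix.trace_smul, smul_eq_mul]
  have hdet : l ^ 2 * A.det ^ k = A.det := by
    conv_rhs => rw [← hdA, hrel]
    rw [Matrix.det_smul, Matrix.det_pow, Fintype.card_fin]
  rcases hk with rfl | rfl
  · have h5 := congrArg Matrix.trace e2
    simp only [Matrix.trace_smul, Matrix.trace_sub, Matrix.trace_one, smul_eq_mul,
      Fintype.card_fin] at h5
    rw [h5] at htr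
    refine poly_contra A.trace A.det l hP hQ hl7 (Or.inl ⟨?_, hdet⟩)
    linear_combination htr
  · have h5 := congrArg Matrix.trace e4
    simp only [Matrix.trace_smul, Matrix.trace_sub, Matrix.trace_one, smul_eq_mul,
      Fintype.card_fin] at h5
    rw [h5] at htr
    refine poly_contra A.trace A.det l hP hQ hl7 (Or.inr ⟨?_, hdet⟩)
    linear_combination htr

private def T1 : Matrix.GeneralLinearGroup (Fin 2) ℂ :=
  ⟨!![1, 1; 0, 1], !![1, -1; 0, 1],
    by ext i j; fin_cases i <;> fin_cases j <;> norm_num [Matrix.mul_apply, Fin.sum_univ_two, Matrix.one_apply],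
    by ext i j; fin_cases i <;> fin_cases j <;> norm_num [Matrix.mul_apply, Fin.sum_univ_two, Matrix.one_apply]⟩

private def T2 : Matrix.GeneralLinearGroup (Fin 2) ℂ :=
  ⟨!![1, 0; 1, 1], !![1, 0; -1, 1],
    by ext i j; fin_cases i <;> fin_cases j <;> norm_num [Matrix.mul_apply, Fin.sum_univ_two, Matrix.one_apply],
    by ext i j; fin_cases i <;> fin_cases j <;> norm_num [Matrix.mul_apply, Fin.sum_univ_two, Matrix.one_apply]⟩

private lemma center_scalar (u : Matrix.GeneralLinearGroup (Fin 2) ℂ)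
    (hu : u ∈ Subgroup.center (Matrix.GeneralLinearGroup (Fin 2) ℂ)) :
    ∃ c : ℂ, (u : Matrix (Fin 2) (Fin 2) ℂ) = c • 1 := by
  rw [Subgroup.mem_center_iff] at hu
  have h1 : (T1 : Matrix (Fin 2) (Fin 2) ℂ) * u = u * T1 := by
    have := hu T1
    exact congrArg Units.val this
  have h2 : (T2 : Matrix (Fin 2) (Fin 2) ℂ) * u = u * T2 := by
    have := hu T2
    exact congrArg Units.val this
  set U : Matrix (Fin 2) (Fin 2) ℂ := (u : Matrix (Fin 2) (Fin 2) ℂ) with hU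
  have e10 : U 1 0 = 0 := by
    have := congrFun (congrFun h1 0) 0
    simp [T1, Matrix.mul_apply, Fin.sum_univ_two] at this
    linear_combination this
  have e11 : U 1 1 = U 0 0 := by
    have := congrFun (congrFun h1 0) 1
    simp [T1, Matrix.mul_apply, Fin.sum_univ_two] at this
    linear_combination this
  have e01 : U 0 1 = 0 := by
    have := congrFun (congrFun h2 1) 1
    simp [T2, Matrix.mul_apply, Fin.sum_univ_two] at this
    linear_combination this
  refine ⟨U 0 0, ?_⟩
  ext i j
  fin_cases i <;> fin_cases j <;>
    simp [Matrix.one_apply, e10, e11, e01]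

/-- A nonabelian group of order 21 admits no effective action on ℙ¹(ℂ) by projective
transformations: there is no injective group homomorphism into PGL(2,ℂ). -/
theorem no_faithful_PGL2_rep (H : Type*) [Group H] (hcard : Nat.card H = 21)
    (hna : ¬∀ a b : H, a * b = b * a) :
    ¬∃ φ : H →* PGL2C, Function.Injective φ := by
  rintro ⟨φ, hinj⟩
  have hfin : Finite H := Nat.finite_of_card_ne_zero (by rw [hcard]; norm_num)
  have := Fintype.ofFinite H
  have f7 : Fact (Nat.Prime 7) := ⟨by norm_num⟩
  have f3 : Fact (Nat.Prime 3) := ⟨by norm_num⟩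
  have hcard' : Fintype.card H = 21 := by rw [← Nat.card_eq_fintype_card, hcard]
  obtain ⟨a, ha⟩ := exists_prime_orderOf_dvd_card 7 (by rw [hcard']; norm_num)
  obtain ⟨b, hb⟩ := exists_prime_orderOf_dvd_card 3 (by rw [hcard']; norm_num)
  have hpa : IsPGroup 7 (Subgroup.zpowers a) :=
    IsPGroup.of_card (n := 1) (by rw [Nat.card_zpowers, ha, pow_one])
  obtain ⟨P, hle⟩ := hpa.exists_le_sylow
  have h7d : (7:ℕ) ∣ Nat.card P.toSubgroup := by
    have h := Subgroup.card_dvd_of_le hle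
    rwa [Nat.card_zpowers, ha] at h
  have hPd : Nat.card P.toSubgroup ∣ 21 := hcard ▸ Subgroup.card_subgroup_dvd_card P.toSubgroup
  have hcardP : Nat.card P.toSubgroup = 7 := by
    obtain ⟨n, hn⟩ := IsPGroup.iff_card.mp P.isPGroup'
    match n, hn with
    | 0, hn => rw [hn] at h7d; norm_num at h7d
    | 1, hn => rw [hn, pow_one]
    | (n+2), hn =>
        exfalso
        rw [hn] at hPd
        have h49 : (49:ℕ) ∣ 21 := dvd_trans (by
          have : (7:ℕ)^2 ∣ 7^(n+2) := pow_dvd_pow 7 (by omega)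
          norm_num at this ⊢
          exact this) hPd
        norm_num at h49
  have hPz : Subgroup.zpowers a = P.toSubgroup := by
    apply SetLike.ext'
    apply Set.eq_of_subset_of_ncard_le hle
    rw [← Nat.card_coe_set_eq, ← Nat.card_coe_set_eq]
    simp only [SetLike.coe_sort_coe]
    rw [hcardP, Nat.card_zpowers, ha]
  have hidx : P.toSubgroup.index = 3 := by
    have h := Subgroup.card_mul_index P.toSubgroup
    rw [hcardP, hcard] at h
    omega
  have hfinS : Finite (Sylow 7 H) := by
    apply Finite.of_injective (fun Q : Sylow 7 H => Q.toSubgroup)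
    intro Q R h
    exact Sylow.ext h
  have hnum : Nat.card (Sylow 7 H) = 1 := by
    have hdvd := Sylow.card_dvd_index P
    rw [hidx] at hdvd
    have hmod : Nat.card (Sylow 7 H) % 7 = 1 % 7 := card_sylow_modEq_one 7 H
    have hl : Nat.card (Sylow 7 H) ≤ 3 := Nat.le_of_dvd (by norm_num) hdvd
    omega
  have hss : Subsingleton (Sylow 7 H) := (Nat.card_eq_one_iff_unique.mp hnum).1
  have hsc : SemiconjBy b a (b * a * b⁻¹) := by unfold SemiconjBy; group
  have hc7 : orderOf (b * a * b⁻¹) = 7 := by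
    rw [← SemiconjBy.orderOf_eq b hsc, ha]
  have hpc : IsPGroup 7 (Subgroup.zpowers (b * a * b⁻¹)) :=
    IsPGroup.of_card (n := 1) (by rw [Nat.card_zpowers, hc7, pow_one])
  obtain ⟨Q, hleQ⟩ := hpc.exists_le_sylow
  have hmem : b * a * b⁻¹ ∈ Subgroup.zpowers a := by
    rw [hPz]
    have hQP : Q = P := Subsingleton.elim _ _
    exact hQP ▸ hleQ (Subgroup.mem_zpowers _)
  obtain ⟨m, hm⟩ := Subgroup.mem_zpowers_iff.mp hmem
  obtain ⟨k, hkdef⟩ : ∃ k : ℕ, k = (m % 7).toNat := ⟨_, rfl⟩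
  have hmn : (0:ℤ) ≤ m % 7 := Int.emod_nonneg m (by norm_num)
  have hml : m % 7 < 7 := Int.emod_lt_of_pos m (by norm_num)
  have hk7 : k < 7 := by omega
  have hak : a ^ k = b * a * b⁻¹ := by
    rw [← hm]
    have hcast : (k : ℤ) = m % 7 := by rw [hkdef]; exact Int.toNat_of_nonneg hmn
    have hz : a ^ (m % (7:ℤ)) = a ^ m := by
      have h := zpow_mod_orderOf a m
      rw [ha] at h
      push_cast at h
      exact h
    rw [← zpow_natCast a k, hcast, hz]
  have hconjpow : ∀ (g y : H) (n : ℕ), g * y ^ n * g⁻¹ = (g * y * g⁻¹) ^ n := by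
    intro g y n
    induction n with
    | zero => simp
    | succ n ih => rw [pow_succ, pow_succ, ← ih]; group
  have hb3 : b ^ 3 = 1 := by rw [← hb]; exact pow_orderOf_eq_one b
  have t1 : b * a * b⁻¹ = a ^ k := hak.symm
  have t2 : b * a ^ k * b⁻¹ = a ^ (k * k) := by rw [hconjpow b a k, t1, ← pow_mul]
  have t3 : b * a ^ (k * k) * b⁻¹ = a ^ (k * k * k) := by
    rw [hconjpow b a (k * k), t1, ← pow_mul, mul_assoc]
  have t4 : b * (b * (b * a * b⁻¹) * b⁻¹) * b⁻¹ = a ^ (k * k * k) := by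
    rw [t1, t2, t3]
  have t5 : b * (b * (b * a * b⁻¹) * b⁻¹) * b⁻¹ = b ^ 3 * a * (b ^ 3)⁻¹ := by
    rw [pow_succ, pow_succ, pow_one]; group
  have h3 : a ^ (k ^ 3) = a ^ 1 := by
    have e : k ^ 3 = k * k * k := by ring
    rw [pow_one, e, ← t4, t5, hb3, one_mul, inv_one, mul_one]
  have hmodk : k ^ 3 % 7 = 1 % 7 := by
    have h := pow_eq_pow_iff_modEq.mp h3
    rwa [ha] at h
  have hk124 : k = 1 ∨ k = 2 ∨ k = 4 := by
    interval_cases k <;> revert hmodk <;> decide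
  rcases hk124 with rfl | hk24
  · -- abelian case
    have hba : b * a = a * b := by
      have h1 : b * a * b⁻¹ = a := by rw [← hak, pow_one]
      calc b * a = (b * a * b⁻¹) * b := by group
        _ = a * b := by rw [h1]
    have hcomm : Commute a b := hba.symm
    have h21 : orderOf (a * b) = 21 := by
      rw [hcomm.orderOf_mul_eq_mul_orderOf_of_coprime (by rw [ha, hb]; norm_num), ha, hb]
    have hcy : IsCyclic H := isCyclic_of_orderOf_eq_card (a * b) (by rw [h21, hcard])
    obtain ⟨g, hg⟩ := hcy.exists_generator
    apply hna
    intro x y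
    obtain ⟨i, hi⟩ := Subgroup.mem_zpowers_iff.mp (hg x)
    obtain ⟨j, hj⟩ := Subgroup.mem_zpowers_iff.mp (hg y)
    rw [← hi, ← hj, ← zpow_add, ← zpow_add, add_comm]
  · -- PGL case
    have hxo : orderOf (φ a) = 7 := (orderOf_injective φ hinj a).trans ha
    have hx7 : (φ a) ^ 7 = 1 := by rw [← hxo]; exact pow_orderOf_eq_one _
    have hxne1 : φ a ≠ 1 := by
      intro h
      rw [h, orderOf_one] at hxo
      norm_num at hxo
    have hrelq : (φ b) * (φ a) * (φ b)⁻¹ = (φ a) ^ k := by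
      rw [← map_pow, hak, map_mul, map_mul, map_inv]
    obtain ⟨A₀, hA₀⟩ := QuotientGroup.mk'_surjective
      (Subgroup.center (Matrix.GeneralLinearGroup (Fin 2) ℂ)) (φ a)
    obtain ⟨B₀, hB₀⟩ := QuotientGroup.mk'_surjective
      (Subgroup.center (Matrix.GeneralLinearGroup (Fin 2) ℂ)) (φ b)
    have hc1 : A₀ ^ 7 ∈ Subgroup.center (Matrix.GeneralLinearGroup (Fin 2) ℂ) := by
      apply (QuotientGroup.eq_one_iff _).mp
      have h := map_pow (QuotientGroup.mk' (Subgroup.center (Matrix.GeneralLinearGroup (Fin 2) ℂ))) A₀ 7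
      rw [hA₀, hx7] at h
      rw [← QuotientGroup.mk'_apply, h]
    obtain ⟨c, hc⟩ := center_scalar _ hc1
    have hM7 : (A₀ : Matrix (Fin 2) (Fin 2) ℂ) ^ 7 = c • 1 := by
      rw [← Units.val_pow_eq_pow_val, hc]
    have hdM : (A₀ : Matrix (Fin 2) (Fin 2) ℂ).det ≠ 0 :=
      ((Matrix.isUnit_iff_isUnit_det _).mp ⟨A₀, rfl⟩).ne_zero
    have hc0 : c ≠ 0 := by
      intro h
      rw [h, zero_smul] at hM7
      have hz : (A₀ : Matrix (Fin 2) (Fin 2) ℂ).det ^ 7 = 0 := by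
        rw [← Matrix.det_pow, hM7, Matrix.det_zero]
      exact hdM (pow_eq_zero_iff (by norm_num) |>.mp hz)
    obtain ⟨μ, hμ⟩ := IsAlgClosed.exists_pow_nat_eq (k := ℂ) c (by norm_num : 0 < 7)
    have hμ0 : μ ≠ 0 := by
      intro h
      rw [h] at hμ
      simp at hμ
      exact hc0 hμ.symm
    set A : Matrix (Fin 2) (Fin 2) ℂ := μ⁻¹ • (A₀ : Matrix (Fin 2) (Fin 2) ℂ) with hA
    have hA7 : A ^ 7 = 1 := by
      rw [hA, smul_pow, hM7, smul_smul, ← hμ, ← mul_pow, inv_mul_cancel₀ hμ0, one_pow, one_smul]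
    have hns : ∀ e : ℂ, A ≠ e • 1 := by
      intro e he
      have hMe : (A₀ : Matrix (Fin 2) (Fin 2) ℂ) = (μ * e) • 1 := by
        have h1 : (A₀ : Matrix (Fin 2) (Fin 2) ℂ) = μ • A := (smul_inv_smul₀ hμ0 _).symm
        rw [h1, he, smul_smul]
      have hcen : A₀ ∈ Subgroup.center (Matrix.GeneralLinearGroup (Fin 2) ℂ) := by
        rw [Subgroup.mem_center_iff]
        intro g
        apply Units.ext
        rw [Units.val_mul, Units.val_mul, hMe, smul_mul_assoc, mul_smul_comm, one_mul, mul_one]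
      apply hxne1
      rw [← hA₀, QuotientGroup.mk'_apply, QuotientGroup.eq_one_iff]
      exact hcen
    have hz : B₀ * A₀ * B₀⁻¹ * (A₀ ^ k)⁻¹ ∈
        Subgroup.center (Matrix.GeneralLinearGroup (Fin 2) ℂ) := by
      apply (QuotientGroup.eq_one_iff _).mp
      have h := congrArg (QuotientGroup.mk'
        (Subgroup.center (Matrix.GeneralLinearGroup (Fin 2) ℂ)))
        (rfl : B₀ * A₀ * B₀⁻¹ * (A₀ ^ k)⁻¹ = B₀ * A₀ * B₀⁻¹ * (A₀ ^ k)⁻¹)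
      rw [← QuotientGroup.mk'_apply]
      rw [map_mul, map_mul, map_mul, map_inv, map_inv, map_pow, hA₀, hB₀, hrelq]
      group
    obtain ⟨c', hc'⟩ := center_scalar _ hz
    have hrelM : (B₀ : Matrix (Fin 2) (Fin 2) ℂ) * (A₀ : Matrix (Fin 2) (Fin 2) ℂ) *
        ((B₀⁻¹ : Matrix.GeneralLinearGroup (Fin 2) ℂ) : Matrix (Fin 2) (Fin 2) ℂ) =
        c' • (A₀ : Matrix (Fin 2) (Fin 2) ℂ) ^ k := by
      have h1 : (B₀ : Matrix (Fin 2) (Fin 2) ℂ) * (A₀ : Matrix (Fin 2) (Fin 2) ℂ) *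
          ((B₀⁻¹ : Matrix.GeneralLinearGroup (Fin 2) ℂ) : Matrix (Fin 2) (Fin 2) ℂ) *
          (((A₀ ^ k)⁻¹ : Matrix.GeneralLinearGroup (Fin 2) ℂ) : Matrix (Fin 2) (Fin 2) ℂ)
          = c' • 1 := by
        rw [← Units.val_mul, ← Units.val_mul, ← Units.val_mul]
        exact hc'
      have h2 := congrArg
        (fun X : Matrix (Fin 2) (Fin 2) ℂ =>
          X * ((A₀ ^ k : Matrix.GeneralLinearGroup (Fin 2) ℂ) : Matrix (Fin 2) (Fin 2) ℂ)) h1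
      rw [mul_assoc ((B₀ : Matrix (Fin 2) (Fin 2) ℂ) * (A₀ : Matrix (Fin 2) (Fin 2) ℂ) *
            ((B₀⁻¹ : Matrix.GeneralLinearGroup (Fin 2) ℂ) : Matrix (Fin 2) (Fin 2) ℂ)),
        ← Units.val_mul ((A₀ ^ k)⁻¹) (A₀ ^ k), inv_mul_cancel (A₀ ^ k), Units.val_one,
        mul_one, smul_mul_assoc, one_mul, Units.val_pow_eq_pow_val] at h2
      exact h2
    have hrelA : (B₀ : Matrix (Fin 2) (Fin 2) ℂ) * A *
        ((B₀⁻¹ : Matrix.GeneralLinearGroup (Fin 2) ℂ) : Matrix (Fin 2) (Fin 2) ℂ) =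
        (μ⁻¹ * c' * μ ^ k) • A ^ k := by
      rw [hA, mul_smul_comm, smul_mul_assoc, hrelM, smul_pow, smul_smul, smul_smul]
      congr 1
      rw [inv_pow]
      field_simp
    exact matrix_contra A (B₀ : Matrix (Fin 2) (Fin 2) ℂ)
      ((B₀⁻¹ : Matrix.GeneralLinearGroup (Fin 2) ℂ) : Matrix (Fin 2) (Fin 2) ℂ)
      (by rw [← Units.val_mul, mul_inv_cancel, Units.val_one])
      (by rw [← Units.val_mul, inv_mul_cancel, Units.val_one])
      (μ⁻¹ * c' * μ ^ k) k hk24 hA7 hns hrelA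
end

section
/- Let H be a nonabelian group of order 21 and let φ : H → PGL(3,ℂ) be an injective group homomorphism, where PGL(3,ℂ) = GL(3,ℂ)/center. Then φ lifts to the special linear group: there exists an injective group homomorphism ψ : H → SL(3,ℂ) such that the composition of ψ with the natural projection SL(3,ℂ) → PGL(3,ℂ) equals φ. -/
/-- PGL(3,ℂ): the quotient of GL(3,ℂ) by its center. -/
abbrev PGL3C :=
  Matrix.GeneralLinearGroup (Fin 3) ℂ ⧸ Subgroup.center (Matrix.GeneralLinearGroup (Fin 3) ℂ)

/-- The natural projection SL(3,ℂ) → PGL(3,ℂ). -/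
noncomputable def SLtoPGL3 : Matrix.SpecialLinearGroup (Fin 3) ℂ →* PGL3C :=
  (QuotientGroup.mk' (Subgroup.center (Matrix.GeneralLinearGroup (Fin 3) ℂ))).comp
    Matrix.SpecialLinearGroup.toGL


section Helpers

open Matrix

local notation "SL3" => Matrix.SpecialLinearGroup (Fin 3) ℂ
local notation "GL3" => Matrix.GeneralLinearGroup (Fin 3) ℂ
local notation "M3" => Matrix (Fin 3) (Fin 3) ℂ

lemma scalar_smul_one (c : ℂ) : Matrix.scalar (Fin 3) c = c • (1 : M3) := by
  ext i j
  by_cases h : i = j <;> simp [Matrix.scalar_apply, Matrix.diagonal_apply, Matrix.one_apply, h]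

lemma mem_center_GL3 {u : GL3} (hu : u ∈ Subgroup.center GL3) :
    ∃ c : ℂ, (u : M3) = c • 1 := by
  have h := Subgroup.mem_center_iff.mp hu
  have hmem : (u : M3) ∈ Set.range (Matrix.scalar (Fin 3)) := by
    apply Matrix.mem_range_scalar_of_commute_transvectionStruct
    intro t
    have hdet : (t.toMatrix.det : ℂ) ≠ 0 := by
      rw [Matrix.TransvectionStruct.det]; exact one_ne_zero
    have h2 := h (Matrix.GeneralLinearGroup.mkOfDetNeZero t.toMatrix hdet)
    exact congrArg Units.val h2
  obtain ⟨c, hc⟩ := hmem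
  exact ⟨c, by rw [← hc, scalar_smul_one]⟩

lemma scalar_mem_center_GL3 (u : GL3) (c : ℂ) (hc : (u : M3) = c • 1) :
    u ∈ Subgroup.center GL3 := by
  rw [Subgroup.mem_center_iff]
  intro g
  apply Units.ext
  show (g : M3) * (u : M3) = (u : M3) * (g : M3)
  rw [hc, mul_smul_comm, smul_mul_assoc, mul_one, one_mul]

lemma SLtoPGL3_eq_one_iff (s : SL3) :
    SLtoPGL3 s = 1 ↔ ∃ c : ℂ, (s : M3) = c • 1 := by
  have : SLtoPGL3 s = 1 ↔ Matrix.SpecialLinearGroup.toGL s ∈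
      Subgroup.center GL3 := by
    rw [SLtoPGL3, MonoidHom.comp_apply, QuotientGroup.mk'_apply, QuotientGroup.eq_one_iff]
  rw [this]
  constructor
  · intro h
    exact mem_center_GL3 h
  · intro ⟨c, hc⟩
    exact scalar_mem_center_GL3 _ c hc

lemma SLtoPGL3_surjective : Function.Surjective SLtoPGL3 := by
  intro q
  induction q using QuotientGroup.induction_on with
  | H g =>
    have hdet : (g : M3).det ≠ 0 := by
      have := (Matrix.GeneralLinearGroup.det g).ne_zero
      simpa using this
    obtain ⟨c, hc⟩ := Complex.isAlgClosed.exists_pow_nat_eq ((g : M3).det) (n := 3) (by norm_num)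
    have hcne : c ≠ 0 := by
      intro h; rw [h] at hc; simp at hc; exact hdet hc.symm
    refine ⟨⟨c⁻¹ • (g : M3), ?_⟩, ?_⟩
    · rw [Matrix.det_smul, Fintype.card_fin, ← hc]
      field_simp
    · have hu1 : (c • (1 : M3)) * (c⁻¹ • (1 : M3)) = 1 := by
        rw [smul_mul_assoc, one_mul, smul_smul, mul_inv_cancel₀ hcne, one_smul]
      have hu2 : (c⁻¹ • (1 : M3)) * (c • (1 : M3)) = 1 := by
        rw [smul_mul_assoc, one_mul, smul_smul, inv_mul_cancel₀ hcne, one_smul]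
      set u : GL3 := ⟨c • (1 : M3), c⁻¹ • (1 : M3), hu1, hu2⟩ with hudef
      have : QuotientGroup.mk' (Subgroup.center GL3) g = QuotientGroup.mk g := rfl
      rw [SLtoPGL3]
      erw [MonoidHom.comp_apply]
      rw [← this, QuotientGroup.mk'_eq_mk']
      refine ⟨u, scalar_mem_center_GL3 u c rfl, ?_⟩
      apply Units.ext
      show (c⁻¹ • (g : M3)) * (c • (1 : M3)) = (g : M3)
      rw [smul_mul_assoc, mul_smul_comm, mul_one, smul_smul, inv_mul_cancel₀ hcne, one_smul]
end Helpers


section Group21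

lemma group21_struct (H : Type*) [Group H] (hcard : Nat.card H = 21)
    (hna : ¬∀ a b : H, a * b = b * a) :
    ∃ (a b : H) (r : ℕ), orderOf a = 7 ∧ orderOf b = 3 ∧ b * a * b⁻¹ = a ^ r ∧
      ((r : ZMod 7)) ^ 3 = 1 ∧ (r : ZMod 7) ≠ 1 ∧
      Subgroup.closure ({a, b} : Set H) = ⊤ := by
  have hfin : Finite H := Nat.finite_of_card_ne_zero (by omega)
  have hp7 : Fact (Nat.Prime 7) := ⟨by norm_num⟩
  obtain ⟨a, ha⟩ := exists_prime_orderOf_dvd_card' 7 (by rw [hcard]; norm_num)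
  obtain ⟨b, hb⟩ := exists_prime_orderOf_dvd_card' 3 (by rw [hcard]; norm_num)
  -- the closure of any pair of elements of orders 7 and 3 is everything
  have hclosure : Subgroup.closure ({a, b} : Set H) = ⊤ := by
    set K := Subgroup.closure ({a, b} : Set H) with hK
    have h7 : 7 ∣ Nat.card K := by
      rw [← ha]
      exact Subgroup.orderOf_dvd_natCard K (Subgroup.subset_closure (by simp))
    have h3 : 3 ∣ Nat.card K := by
      rw [← hb]
      exact Subgroup.orderOf_dvd_natCard K (Subgroup.subset_closure (by simp))
    have hdvd : Nat.card K ∣ 21 := hcard ▸ Subgroup.card_subgroup_dvd_card K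
    have h21 : (21 : ℕ) ∣ Nat.card K := by
      have := Nat.Coprime.mul_dvd_of_dvd_of_dvd (by norm_num : Nat.Coprime 7 3) h7 h3
      simpa using this
    have hcK : Nat.card K = 21 := Nat.dvd_antisymm hdvd h21
    exact Subgroup.eq_top_of_card_eq K (by rw [hcK, hcard])
  -- the Sylow 7-subgroup ⟨a⟩ is normal
  have hnorm : (Subgroup.zpowers a).Normal := by
    have hpz : IsPGroup 7 (Subgroup.zpowers a) := by
      apply IsPGroup.of_card (n := 1)
      rw [Nat.card_zpowers, ha, pow_one]
    obtain ⟨Q, hQ⟩ := hpz.exists_le_sylow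
    have hQcard : Nat.card Q = 7 := by
      obtain ⟨n, hn⟩ := IsPGroup.iff_card.mp Q.isPGroup'
      have hdvd : Nat.card Q ∣ 21 := hcard ▸ Subgroup.card_subgroup_dvd_card Q.toSubgroup
      have h7d : 7 ∣ Nat.card Q := by
        have := Subgroup.card_dvd_of_le hQ
        rw [Nat.card_zpowers, ha] at this
        exact this
      rw [hn] at hdvd h7d ⊢
      rcases n with _ | n
      · simp at h7d
      · rcases n with _ | n
        · norm_num
        · exfalso
          have h49 : (49:ℕ) ∣ 21 := by
            refine dvd_trans ?_ hdvd
            exact ⟨7 ^ n, by ring⟩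
          exact absurd (Nat.le_of_dvd (by norm_num) h49) (by norm_num)
    have hZQ : Subgroup.zpowers a = Q.toSubgroup := by
      apply Subgroup.eq_of_le_of_card_ge hQ
      rw [hQcard, Nat.card_zpowers, ha]
    have hsub : Subsingleton (Sylow 7 H) := by
      have hmod := card_sylow_modEq_one 7 H
      have hdvd : Nat.card (Sylow 7 H) ∣ Q.toSubgroup.index := Sylow.card_dvd_index Q
      have hindex : Q.toSubgroup.index = 3 := by
        have := Subgroup.card_mul_index Q.toSubgroup
        rw [hQcard, hcard] at this
        omega
      rw [hindex] at hdvd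
      have hle : Nat.card (Sylow 7 H) ≤ 3 := Nat.le_of_dvd (by norm_num) hdvd
      have h1 : Nat.card (Sylow 7 H) % 7 = 1 % 7 := hmod
      have : Nat.card (Sylow 7 H) = 1 := by omega
      exact (Nat.card_eq_one_iff_unique.mp this).1
    have : Subgroup.normalizer (Q.toSubgroup : Set H) = ⊤ := by
      rw [eq_top_iff]
      intro g _
      exact Sylow.smul_eq_iff_mem_normalizer.mp (Subsingleton.elim _ _)
    rw [hZQ]
    exact Subgroup.normalizer_eq_top_iff.mp this
  -- conjugation relation
  have hmem : b * a * b⁻¹ ∈ Subgroup.zpowers a := hnorm.conj_mem a (Subgroup.mem_zpowers a) b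
  obtain ⟨m, hm⟩ := Subgroup.mem_zpowers_iff.mp hmem
  set r : ℕ := (m % 7).toNat with hrdef
  have hr : b * a * b⁻¹ = a ^ r := by
    rw [← hm]
    have h7 : a ^ (7 : ℤ) = 1 := by
      rw [show ((7:ℤ)) = ((7:ℕ):ℤ) by norm_num, zpow_natCast, ← ha, pow_orderOf_eq_one]
    have : a ^ m = a ^ (m % 7) := by
      conv_lhs => rw [← Int.mul_ediv_add_emod m 7]
      rw [zpow_add, zpow_mul, h7, one_zpow, one_mul]
    rw [this, hrdef, ← zpow_natCast, Int.toNat_of_nonneg (Int.emod_nonneg m (by norm_num))]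
  -- power relation: b^k * a * b^-k = a^(r^k)
  have hconj : ∀ k : ℕ, b ^ k * a * (b ^ k)⁻¹ = a ^ (r ^ k) := by
    intro k
    induction k with
    | zero => simp
    | succ k ih =>
      have : b ^ (k+1) * a * (b ^ (k+1))⁻¹ = b * (b ^ k * a * (b ^ k)⁻¹) * b⁻¹ := by
        rw [pow_succ']
        group
      rw [this, ih, ← conj_pow, hr, ← pow_mul, pow_succ]
      ring_nf
  have hr3 : ((r : ZMod 7)) ^ 3 = 1 := by
    have h3 := hconj 3
    have hb1 : b ^ 3 = 1 := by rw [← hb]; exact pow_orderOf_eq_one b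
    rw [hb1] at h3
    simp at h3
    have : a ^ (r ^ 3) = a ^ 1 := by rw [pow_one, ← h3]
    have hmod := pow_eq_pow_iff_modEq.mp this
    rw [ha] at hmod
    have := (ZMod.natCast_eq_natCast_iff _ _ _).mpr hmod
    push_cast at this
    simpa using this
  have hr1 : (r : ZMod 7) ≠ 1 := by
    intro h
    have hmod : r ≡ 1 [MOD 7] := by
      have := (ZMod.natCast_eq_natCast_iff r 1 7).mp (by push_cast; simpa using h)
      exact this
    have : a ^ r = a ^ 1 := by
      apply pow_eq_pow_iff_modEq.mpr
      rw [ha]; exact hmod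
    rw [pow_one] at this
    have hcomm : a * b = b * a := by
      have : b * a * b⁻¹ = a := by rw [hr, this]
      calc a * b = (b * a * b⁻¹) * b := by rw [this]
        _ = b * a := by group
    -- now H is abelian, contradiction
    apply hna
    intro x y
    have hx : x ∈ Subgroup.closure ({a, b} : Set H) := by rw [hclosure]; trivial
    have hy : y ∈ Subgroup.closure ({a, b} : Set H) := by rw [hclosure]; trivial
    induction hx, hy using Subgroup.closure_induction₂ with
    | mem u v hu hv =>
      simp only [Set.mem_insert_iff, Set.mem_singleton_iff] at hu hv
      rcases hu with rfl | rfl <;> rcases hv with rfl | rfl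
      · rfl
      · exact hcomm
      · exact hcomm.symm
      · rfl
    | one_left => simp
    | one_right => simp
    | mul_left u v w _ _ _ ih1 ih2 =>
      rw [mul_assoc, ih2, ← mul_assoc, ih1, mul_assoc]
    | mul_right u v w _ _ _ ih1 ih2 =>
      rw [← mul_assoc, ih1, mul_assoc, ih2, ← mul_assoc]
    | inv_left u v _ _ ih =>
      calc u⁻¹ * v = u⁻¹ * (v * u) * u⁻¹ := by group
        _ = u⁻¹ * (u * v) * u⁻¹ := by rw [← ih]
        _ = v * u⁻¹ := by group
    | inv_right u v _ _ ih =>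
      calc u * v⁻¹ = v⁻¹ * (v * u) * v⁻¹ := by group
        _ = v⁻¹ * (u * v) * v⁻¹ := by rw [← ih]
        _ = v⁻¹ * u := by group
  exact ⟨a, b, r, ha, hb, hr, hr3, hr1, hclosure⟩

end Group21


section Eigen

open Matrix Polynomial

local notation "SL3" => Matrix.SpecialLinearGroup (Fin 3) ℂ
local notation "M3" => Matrix (Fin 3) (Fin 3) ℂ

lemma pow_mod_helper {M : Type*} [Monoid M] {g : M} {n : ℕ} (h : g ^ n = 1) (m : ℕ) :
    g ^ m = g ^ (m % n) := by
  conv_lhs => rw [← Nat.div_add_mod m n, pow_add, pow_mul, h, one_pow, one_mul]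

lemma mulVec_pow_eig {N : M3} {w : Fin 3 → ℂ} {μ : ℂ}
    (h : N.mulVec w = μ • w) (k : ℕ) : (N ^ k).mulVec w = μ ^ k • w := by
  induction k with
  | zero => simp
  | succ k ih =>
    rw [pow_succ, ← mulVec_mulVec, h, mulVec_smul, ih, smul_smul, pow_succ, mul_comm]

lemma zmod7_facts : ∀ s : ZMod 7, s ^ 3 = 1 → s ≠ 1 → s ^ 2 ≠ 1 ∧ s ^ 2 ≠ s ∧ s ^ 4 = s := by
  decide

lemma exists_eigenvalue_ne_one {Am : M3} (hAm7 : Am ^ 7 = 1) (hAmne : Am ≠ 1) :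
    ∃ (lam : ℂ) (v : Fin 3 → ℂ), lam ^ 7 = 1 ∧ lam ≠ 1 ∧ v ≠ 0 ∧ Am.mulVec v = lam • v := by
  set e := Matrix.toLinAlgEquiv' (n := Fin 3) (R := ℂ)
  set f : Module.End ℂ (Fin 3 → ℂ) := e Am with hf
  have hf7 : f ^ 7 = 1 := by rw [hf, ← map_pow, hAm7]; exact _root_.map_one e
  have hfne : f ≠ 1 := by
    intro h
    exact hAmne (e.injective (by rw [← hf, h]; exact (_root_.map_one e).symm))
  have hint : IsIntegral ℂ f := Algebra.IsIntegral.isIntegral f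
  set p := minpoly ℂ f with hp
  have hpmonic : p.Monic := minpoly.monic hint
  have hpdvd : p ∣ X ^ 7 - C (1:ℂ) := by
    apply minpoly.dvd
    rw [map_sub, map_pow, aeval_X, aeval_C, _root_.map_one, hf7, sub_self]
  have hpne : p ≠ 0 := hpmonic.ne_zero
  have hpnotX1 : p ≠ X - C 1 := by
    intro h
    have := minpoly.aeval ℂ f
    rw [← hp, h, map_sub, aeval_X, aeval_C, _root_.map_one, sub_eq_zero] at this
    exact hfne this
  have hdegpos : 0 < p.degree := minpoly.degree_pos hint
  -- squarefreeness of X^7 - 1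
  have hsq : Squarefree (X ^ 7 - C (1:ℂ)) :=
    (Polynomial.separable_X_pow_sub_C (1:ℂ) (by norm_num) one_ne_zero).squarefree
  -- find a root ≠ 1 of p
  have hroot : ∃ lam : ℂ, p.IsRoot lam ∧ lam ≠ 1 := by
    obtain ⟨z, hz⟩ := Complex.exists_root hdegpos
    by_cases hz1 : z = 1
    · subst hz1
      obtain ⟨q, hq⟩ := Polynomial.dvd_iff_isRoot.mpr hz
      have hqne : q ≠ 0 := by
        intro h0; rw [h0, mul_zero] at hq; exact hpne hq
      by_cases hq0 : q.natDegree = 0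
      · exfalso
        obtain ⟨c, hc⟩ : ∃ c, q = C c := ⟨q.coeff 0, Polynomial.eq_C_of_natDegree_eq_zero hq0⟩
        have hcne : c ≠ 0 := by rintro rfl; simp at hc; exact hqne hc
        have hlc : p.leadingCoeff = c := by
          rw [hq, hc, leadingCoeff_mul, leadingCoeff_C,
            (Polynomial.monic_X_sub_C (1:ℂ)).leadingCoeff, one_mul]
        rw [hpmonic.leadingCoeff] at hlc
        apply hpnotX1
        rw [hq, hc, ← hlc, Polynomial.C_1, mul_one]
      · obtain ⟨z', hz'⟩ := Complex.exists_root
          (show 0 < q.degree by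
            rw [Polynomial.degree_eq_natDegree hqne]
            exact_mod_cast Nat.pos_of_ne_zero hq0)
        by_cases hz'1 : z' = 1
        · exfalso
          subst hz'1
          have hdvd2 : (X - C (1:ℂ)) * (X - C 1) ∣ X ^ 7 - C 1 := by
            refine dvd_trans ?_ hpdvd
            rw [hq]
            exact mul_dvd_mul_left _ (Polynomial.dvd_iff_isRoot.mpr hz')
          exact Polynomial.not_isUnit_X_sub_C (1:ℂ) (hsq _ hdvd2)
        · refine ⟨z', ?_, hz'1⟩
          rw [hq]
          exact Polynomial.IsRoot.dvd hz' (dvd_mul_left q (X - C 1))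
    · exact ⟨z, hz, hz1⟩
  obtain ⟨lam, hlroot, hlne⟩ := hroot
  have hl7 : lam ^ 7 = 1 := by
    have := Polynomial.IsRoot.dvd hlroot hpdvd
    have h2 := this
    rw [Polynomial.IsRoot, Polynomial.eval_sub, Polynomial.eval_pow, Polynomial.eval_X,
      Polynomial.eval_C, sub_eq_zero] at h2
    exact h2
  have hEig : f.HasEigenvalue lam := Module.End.hasEigenvalue_iff_isRoot.mpr hlroot
  obtain ⟨v, hv⟩ := hEig.exists_hasEigenvector
  refine ⟨lam, v, hl7, hlne, hv.right, ?_⟩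
  have := hv.apply_eq_smul
  rwa [hf, Matrix.toLinAlgEquiv'_apply] at this


lemma sl3_cube_eq_one (A x : SL3) (r : ℕ)
    (hA7 : A ^ 7 = 1) (hAne : A ≠ 1)
    (hrel : x * A = A ^ r * x)
    (hr3 : ((r : ZMod 7)) ^ 3 = 1) (hr1 : (r : ZMod 7) ≠ 1)
    (u : ℂ) (hx3 : ((x ^ 3 : SL3) : M3) = u • 1) :
    x ^ 3 = 1 := by
  have hp7 : Fact (Nat.Prime 7) := ⟨by norm_num⟩
  have hAm7 : (A : M3) ^ 7 = 1 := by
    rw [← Matrix.SpecialLinearGroup.coe_pow, hA7, Matrix.SpecialLinearGroup.coe_one]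
  have hAmne : (A : M3) ≠ 1 := fun h => hAne (Subtype.coe_injective
    (show ((A : SL3) : M3) = ((1 : SL3) : M3) from
      h.trans (Matrix.SpecialLinearGroup.coe_one).symm))
  have hXA : (x : M3) * (A : M3) = (A : M3) ^ r * (x : M3) := by
    have := congrArg (Subtype.val) hrel
    simpa [Matrix.SpecialLinearGroup.coe_mul, Matrix.SpecialLinearGroup.coe_pow] using this
  obtain ⟨hs21, hs2s, hs4⟩ := zmod7_facts _ hr3 hr1
  have hr3mod : (r ^ 3) % 7 = 1 % 7 := by
    have : ((r ^ 3 : ℕ) : ZMod 7) = ((1 : ℕ) : ZMod 7) := by push_cast; simpa using hr3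
    exact (ZMod.natCast_eq_natCast_iff _ _ _).mp this
  have hArr : ((A : M3) ^ r) ^ (r ^ 2) = (A : M3) := by
    rw [← pow_mul, pow_mod_helper hAm7, show r * r ^ 2 = r ^ 3 by ring, hr3mod]
    norm_num
  obtain ⟨lam, v, hl7, hlne, hvne, hveq⟩ := exists_eigenvalue_ne_one hAm7 hAmne
  -- work with the unit version of lam for orderOf
  have hlunit : IsUnit lam := IsUnit.of_mul_eq_one (a := lam) (lam ^ 6) (by
    rw [← pow_succ']; exact hl7)
  have hord : orderOf hlunit.unit = 7 := by
    apply orderOf_eq_prime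
    · apply Units.ext
      rw [Units.val_pow_eq_pow_val, IsUnit.unit_spec, Units.val_one]
      exact hl7
    · intro h
      apply hlne
      have := congrArg Units.val h
      rwa [IsUnit.unit_spec, Units.val_one] at this
  have hpowiff : ∀ a b : ℕ, lam ^ a = lam ^ b ↔ ((a : ZMod 7) = (b : ZMod 7)) := by
    intro a b
    rw [ZMod.natCast_eq_natCast_iff, ← hord, ← pow_eq_pow_iff_modEq]
    constructor
    · intro h
      apply Units.ext
      rw [Units.val_pow_eq_pow_val, Units.val_pow_eq_pow_val, IsUnit.unit_spec]
      exact h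
    · intro h
      have := congrArg Units.val h
      rwa [Units.val_pow_eq_pow_val, Units.val_pow_eq_pow_val, IsUnit.unit_spec] at this
  have hne : ∀ a b : ℕ, ((a : ZMod 7) ≠ (b : ZMod 7)) → lam ^ a ≠ lam ^ b :=
    fun a b h h' => h ((hpowiff a b).mp h')
  have d01 : lam ^ (1 : ℕ) ≠ lam ^ (r ^ 2) := by
    apply hne
    push_cast
    intro h
    exact hs21 h.symm
  have d02 : lam ^ (1 : ℕ) ≠ lam ^ (r ^ 4) := by
    apply hne
    push_cast
    rw [hs4]
    intro h
    exact hr1 h.symm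
  have d12 : lam ^ (r ^ 2) ≠ lam ^ (r ^ 4) := by
    apply hne
    push_cast
    rw [hs4]
    exact hs2s
  -- the step
  have hstep : ∀ (w : Fin 3 → ℂ) (μ : ℂ), (A : M3).mulVec w = μ • w →
      (A : M3).mulVec ((x : M3).mulVec w) = μ ^ (r ^ 2) • ((x : M3).mulVec w) := by
    intro w μ hw
    have h1 : ((A : M3) ^ r).mulVec ((x : M3).mulVec w) = μ • ((x : M3).mulVec w) := by
      rw [mulVec_mulVec, ← hXA, ← mulVec_mulVec, hw, mulVec_smul]
    have h2 := mulVec_pow_eig h1 (r ^ 2)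
    rwa [hArr] at h2
  have hv1eq : (A : M3).mulVec ((x : M3).mulVec v) =
      lam ^ (r ^ 2) • ((x : M3).mulVec v) := hstep v lam (by simpa using hveq)
  have hv2eq : (A : M3).mulVec ((x : M3).mulVec ((x : M3).mulVec v)) =
      lam ^ (r ^ 4) • ((x : M3).mulVec ((x : M3).mulVec v)) := by
    have h2 := hstep ((x : M3).mulVec v) (lam ^ (r ^ 2)) hv1eq
    rwa [← pow_mul, show r ^ 2 * r ^ 2 = r ^ 4 by ring] at h2
  -- nonvanishing
  have hXcancel : ∀ w : Fin 3 → ℂ, (x : M3).mulVec w = 0 → w = 0 := by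
    intro w hw
    have hYX : ((x⁻¹ : SL3) : M3) * (x : M3) = 1 := by
      rw [← Matrix.SpecialLinearGroup.coe_mul, inv_mul_cancel,
        Matrix.SpecialLinearGroup.coe_one]
    calc w = ((1 : M3)).mulVec w := (one_mulVec w).symm
      _ = (((x⁻¹ : SL3) : M3) * (x : M3)).mulVec w := by rw [hYX]
      _ = ((x⁻¹ : SL3) : M3).mulVec ((x : M3).mulVec w) := (mulVec_mulVec _ _ _).symm
      _ = 0 := by rw [hw, mulVec_zero]
  have hv1ne : (x : M3).mulVec v ≠ 0 := fun h => hvne (hXcancel v h)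
  have hv2ne : (x : M3).mulVec ((x : M3).mulVec v) ≠ 0 :=
    fun h => hv1ne (hXcancel _ h)
  -- eigenvector family
  have d01' : lam ≠ lam ^ (r ^ 2) := by intro h; exact d01 (by rw [pow_one]; exact h)
  have d02' : lam ≠ lam ^ (r ^ 4) := by intro h; exact d02 (by rw [pow_one]; exact h)
  set vs : Fin 3 → (Fin 3 → ℂ) := ![v, (x : M3).mulVec v, (x : M3).mulVec ((x : M3).mulVec v)]
    with hvsdef
  set μv : Fin 3 → ℂ := ![lam, lam ^ (r ^ 2), lam ^ (r ^ 4)] with hμdef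
  have hμinj : Function.Injective μv := by
    intro i j hij
    fin_cases i <;> fin_cases j
    · rfl
    · exact absurd hij d01'
    · exact absurd hij d02'
    · exact absurd hij.symm d01'
    · rfl
    · exact absurd hij d12
    · exact absurd hij.symm d02'
    · exact absurd hij.symm d12
    · rfl
  set f : Module.End ℂ (Fin 3 → ℂ) := Matrix.toLinAlgEquiv' (A : M3) with hfdef
  have happ : ∀ w, f w = (A : M3).mulVec w := fun w => by
    rw [hfdef, Matrix.toLinAlgEquiv'_apply]
  have hev : ∀ i, f.HasEigenvector (μv i) (vs i) := by
    intro i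
    rw [Module.End.hasEigenvector_iff, Module.End.mem_eigenspace_iff]
    fin_cases i <;>
      simp only [hvsdef, hμdef, Matrix.cons_val_zero, Matrix.cons_val_one, Matrix.head_cons,
        Matrix.cons_val_two, Matrix.tail_cons, Fin.isValue]
    · exact ⟨by rw [happ]; exact hveq, hvne⟩
    · exact ⟨by rw [happ]; exact hv1eq, hv1ne⟩
    · exact ⟨by rw [happ]; exact hv2eq, hv2ne⟩
  have hli : LinearIndependent ℂ vs :=
    Module.End.eigenvectors_linearIndependent' f μv hμinj vs hev
  -- build a basis
  have hcard : Fintype.card (Fin 3) = Module.finrank ℂ (Fin 3 → ℂ) := by simp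
  set b : Module.Basis (Fin 3) ℂ (Fin 3 → ℂ) := basisOfLinearIndependentOfCardEqFinrank hli hcard
    with hbdef
  have hbcoe : ⇑b = vs := coe_basisOfLinearIndependentOfCardEqFinrank hli hcard
  set g : Module.End ℂ (Fin 3 → ℂ) := Matrix.toLin' (x : M3) with hgdef
  have hg0 : g (b 0) = b 1 := by
    rw [hgdef, Matrix.toLin'_apply]
    rw [show b 0 = vs 0 from by rw [hbcoe], show b 1 = vs 1 from by rw [hbcoe]]
    simp [hvsdef]
  have hg1 : g (b 1) = b 2 := by
    rw [hgdef, Matrix.toLin'_apply]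
    rw [show b 1 = vs 1 from by rw [hbcoe], show b 2 = vs 2 from by rw [hbcoe]]
    simp [hvsdef]
  have hg2 : g (b 2) = u • b 0 := by
    rw [hgdef, Matrix.toLin'_apply]
    rw [show b 2 = vs 2 from by rw [hbcoe], show b 0 = vs 0 from by rw [hbcoe]]
    show (x : M3).mulVec ((x : M3).mulVec ((x : M3).mulVec v)) = u • v
    rw [mulVec_mulVec, mulVec_mulVec]
    have hx3' : (x : M3) * (x : M3) * (x : M3) = u • 1 := by
      rw [← hx3, Matrix.SpecialLinearGroup.coe_pow]
      rw [pow_succ, pow_succ, pow_one]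
    rw [hx3', smul_mulVec, one_mulVec]
  -- compute the determinant of g via this basis
  have hdetg : LinearMap.det g = u := by
    rw [← LinearMap.det_toMatrix b g]
    have h00 : LinearMap.toMatrix b b g 0 0 = 0 := by
      rw [LinearMap.toMatrix_apply, hg0, Module.Basis.repr_self]; simp
    have h10 : LinearMap.toMatrix b b g 1 0 = 1 := by
      rw [LinearMap.toMatrix_apply, hg0, Module.Basis.repr_self]; simp
    have h20 : LinearMap.toMatrix b b g 2 0 = 0 := by
      rw [LinearMap.toMatrix_apply, hg0, Module.Basis.repr_self]; simp
    have h01 : LinearMap.toMatrix b b g 0 1 = 0 := by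
      rw [LinearMap.toMatrix_apply, hg1, Module.Basis.repr_self]; simp
    have h11 : LinearMap.toMatrix b b g 1 1 = 0 := by
      rw [LinearMap.toMatrix_apply, hg1, Module.Basis.repr_self]; simp
    have h21 : LinearMap.toMatrix b b g 2 1 = 1 := by
      rw [LinearMap.toMatrix_apply, hg1, Module.Basis.repr_self]; simp
    have h02 : LinearMap.toMatrix b b g 0 2 = u := by
      rw [LinearMap.toMatrix_apply, hg2, _root_.map_smul, Module.Basis.repr_self]; simp
    have h12 : LinearMap.toMatrix b b g 1 2 = 0 := by
      rw [LinearMap.toMatrix_apply, hg2, _root_.map_smul, Module.Basis.repr_self]; simp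
    have h22 : LinearMap.toMatrix b b g 2 2 = 0 := by
      rw [LinearMap.toMatrix_apply, hg2, _root_.map_smul, Module.Basis.repr_self]; simp
    rw [Matrix.det_fin_three, h00, h10, h20, h01, h11, h21, h02, h12, h22]
    ring
  have hdetg' : LinearMap.det g = 1 := by
    rw [hgdef, LinearMap.det_toLin']
    exact x.property
  have hu1 : u = 1 := by rw [← hdetg, hdetg']
  apply Subtype.coe_injective
  show ((x ^ 3 : SL3) : M3) = ((1 : SL3) : M3)
  rw [hx3, hu1, one_smul, Matrix.SpecialLinearGroup.coe_one]

end Eigen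

section Main
local notation "SL3" => Matrix.SpecialLinearGroup (Fin 3) ℂ
local notation "M3" => Matrix (Fin 3) (Fin 3) ℂ

/-- Every injective homomorphism of a nonabelian group of order 21 into PGL(3,ℂ) lifts to
an injective homomorphism into SL(3,ℂ). -/
theorem PGL3_rep_lifts_to_SL3 (H : Type*) [Group H] (hcard : Nat.card H = 21)
    (hna : ¬∀ a b : H, a * b = b * a) (φ : H →* PGL3C) (hφ : Function.Injective φ) :
    ∃ ψ : H →* Matrix.SpecialLinearGroup (Fin 3) ℂ,
      Function.Injective ψ ∧ SLtoPGL3.comp ψ = φ := by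
  obtain ⟨a, b, r, ha7, hb3, hab, hr3, hr1, hcl⟩ := group21_struct H hcard hna
  obtain ⟨A₀, hA₀⟩ := SLtoPGL3_surjective (φ a)
  obtain ⟨x, hx⟩ := SLtoPGL3_surjective (φ b)
  -- normalize A₀ to have A^7 = 1
  have hA07 : SLtoPGL3 (A₀ ^ 7) = 1 := by
    rw [map_pow, hA₀, ← map_pow, ← ha7, pow_orderOf_eq_one, _root_.map_one]
  obtain ⟨c, hc⟩ := (SLtoPGL3_eq_one_iff _).mp hA07
  have hc3 : c ^ 3 = 1 := by
    have hdet := (A₀ ^ 7).property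
    rw [hc] at hdet
    rwa [Matrix.det_smul, Fintype.card_fin, Matrix.det_one, mul_one] at hdet
  have hcne : c ≠ 0 := by
    intro h
    rw [h] at hc3
    simp at hc3
  have hc7 : c ^ 7 = c := by
    calc c ^ 7 = (c ^ 3) ^ 2 * c := by ring
      _ = c := by rw [hc3, one_pow, one_mul]
  have hdetA : (c⁻¹ • (A₀ : M3)).det = 1 := by
    rw [Matrix.det_smul, Fintype.card_fin, A₀.property, mul_one, inv_pow]
    rw [hc3, inv_one]
  set A : SL3 := ⟨c⁻¹ • (A₀ : M3), hdetA⟩ with hAdef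
  have hinvc3 : c⁻¹ ^ 3 = 1 := by rw [inv_pow, hc3, inv_one]
  have hdetz : ((c⁻¹ : ℂ) • (1 : M3)).det = 1 := by
    rw [Matrix.det_smul, Fintype.card_fin, Matrix.det_one, mul_one, hinvc3]
  set Z : SL3 := ⟨c⁻¹ • (1 : M3), hdetz⟩ with hZdef
  have hAfactor : Z * A₀ = A := by
    apply Subtype.coe_injective
    show (c⁻¹ • (1 : M3)) * (A₀ : M3) = c⁻¹ • (A₀ : M3)
    rw [smul_mul_assoc, one_mul]
  have hπA : SLtoPGL3 A = φ a := by
    rw [← hAfactor, map_mul, (SLtoPGL3_eq_one_iff Z).mpr ⟨c⁻¹, rfl⟩, one_mul, hA₀]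
  have hA7 : A ^ 7 = 1 := by
    apply Subtype.coe_injective
    show ((A ^ 7 : SL3) : M3) = ((1 : SL3) : M3)
    rw [Matrix.SpecialLinearGroup.coe_pow, Matrix.SpecialLinearGroup.coe_one]
    show (c⁻¹ • (A₀ : M3)) ^ 7 = 1
    rw [smul_pow, ← Matrix.SpecialLinearGroup.coe_pow, hc, smul_smul, inv_pow, hc7]
    rw [inv_mul_cancel₀ hcne, one_smul]
  have hAne : A ≠ 1 := by
    intro h
    have : φ a = 1 := by rw [← hπA, h, _root_.map_one]
    have ha1 : a = 1 := hφ (by rw [this, _root_.map_one])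
    rw [ha1, orderOf_one] at ha7
    norm_num at ha7
  -- the conjugation relation lifts exactly
  have hrelπ : SLtoPGL3 (x * A * x⁻¹ * (A ^ r)⁻¹) = 1 := by
    have h2 : φ b * φ a * (φ b)⁻¹ = φ a ^ r := by
      have := congrArg φ hab
      simpa only [map_mul, map_inv, map_pow] using this
    simp only [map_mul, map_inv, map_pow, hπA, hx, h2]
    rw [mul_inv_cancel]
  obtain ⟨w, hw⟩ := (SLtoPGL3_eq_one_iff _).mp hrelπ
  have hw3 : w ^ 3 = 1 := by
    have hdet := (x * A * x⁻¹ * (A ^ r)⁻¹).property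
    rw [hw] at hdet
    rwa [Matrix.det_smul, Fintype.card_fin, Matrix.det_one, mul_one] at hdet
  have hdetw : ((w : ℂ) • (1 : M3)).det = 1 := by
    rw [Matrix.det_smul, Fintype.card_fin, Matrix.det_one, mul_one, hw3]
  set W : SL3 := ⟨w • (1 : M3), hdetw⟩ with hWdef
  have hxAW : x * A * x⁻¹ = W * A ^ r := by
    have : x * A * x⁻¹ * (A ^ r)⁻¹ = W := by
      apply Subtype.coe_injective
      exact hw
    rw [← this]
    group
  have hWcomm : ∀ g : SL3, W * g = g * W := by
    intro g
    apply Subtype.coe_injective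
    show (w • (1 : M3)) * (g : M3) = (g : M3) * (w • (1 : M3))
    rw [smul_mul_assoc, one_mul, mul_smul_comm, mul_one]
  have hW1 : W = 1 := by
    have h7 : (x * A * x⁻¹) ^ 7 = 1 := by
      rw [conj_pow, hA7, mul_one, mul_inv_cancel]
    rw [hxAW] at h7
    have hcomm : Commute W (A ^ r) := hWcomm (A ^ r)
    rw [hcomm.mul_pow] at h7
    have hA7r : (A ^ r) ^ 7 = 1 := by rw [← pow_mul, mul_comm, pow_mul, hA7, one_pow]
    rw [hA7r, mul_one] at h7
    have hW3 : W ^ 3 = 1 := by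
      apply Subtype.coe_injective
      show ((W ^ 3 : SL3) : M3) = ((1 : SL3) : M3)
      rw [Matrix.SpecialLinearGroup.coe_pow, Matrix.SpecialLinearGroup.coe_one]
      show (w • (1 : M3)) ^ 3 = 1
      rw [smul_pow, one_pow, hw3, one_smul]
    calc W = (W ^ 3) ^ 2 * W := by rw [hW3, one_pow, one_mul]
      _ = W ^ 7 := by rw [← pow_mul, ← pow_succ]
      _ = 1 := h7
  have hrelSL : x * A = A ^ r * x := by
    have : x * A * x⁻¹ = A ^ r := by rw [hxAW, hW1, one_mul]
    calc x * A = (x * A * x⁻¹) * x := by group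
      _ = A ^ r * x := by rw [this]
  have hx3π : SLtoPGL3 (x ^ 3) = 1 := by
    have hb1 : b ^ 3 = 1 := by rw [← hb3]; exact pow_orderOf_eq_one b
    rw [map_pow, hx, ← map_pow, hb1, _root_.map_one]
  obtain ⟨u, hu⟩ := (SLtoPGL3_eq_one_iff _).mp hx3π
  have hx3 : x ^ 3 = 1 := sl3_cube_eq_one A x r hA7 hAne hrelSL hr3 hr1 u hu
  -- the subgroup generated by A and x
  set K := Subgroup.closure ({A, x} : Set SL3) with hKdef
  have hAK : A ∈ K := Subgroup.subset_closure (by simp)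
  have hxK : x ∈ K := Subgroup.subset_closure (by simp)
  have hswap : ∀ m n : ℕ, x ^ m * A ^ n = A ^ (n * r ^ m) * x ^ m := by
    intro m
    induction m with
    | zero => intro n; simp
    | succ m ih =>
      intro n
      have hsemi : x * A ^ n = A ^ (n * r) * x := by
        have h1 : SemiconjBy x A (A ^ r) := hrelSL
        have h2 := (h1.pow_right n).eq
        rw [← pow_mul] at h2
        rw [h2, mul_comm r n]
      calc x ^ (m+1) * A ^ n = x ^ m * (x * A ^ n) := by rw [pow_succ]; group
        _ = x ^ m * (A ^ (n*r) * x) := by rw [hsemi]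
        _ = (x ^ m * A ^ (n*r)) * x := by group
        _ = (A ^ (n*r*r^m) * x ^ m) * x := by rw [ih]
        _ = A ^ (n * r ^ (m+1)) * x ^ (m+1) := by
            rw [show n*r*r^m = n * r^(m+1) by ring, pow_succ x]
            group
  have hT : ∀ g ∈ K, ∃ i j : ℕ, g = A ^ i * x ^ j := by
    intro g hg
    induction hg using Subgroup.closure_induction with
    | mem y hy =>
      simp only [Set.mem_insert_iff, Set.mem_singleton_iff] at hy
      rcases hy with rfl | rfl
      · exact ⟨1, 0, by simp⟩
      · exact ⟨0, 1, by simp⟩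
    | one => exact ⟨0, 0, by simp⟩
    | mul y z hy hz ihy ihz =>
      obtain ⟨i, j, rfl⟩ := ihy
      obtain ⟨k, l, rfl⟩ := ihz
      refine ⟨i + k * r ^ j, j + l, ?_⟩
      calc A^i*x^j*(A^k*x^l) = A^i * (x^j * A^k) * x^l := by group
        _ = A^i * (A^(k*r^j) * x^j) * x^l := by rw [hswap]
        _ = A^(i + k*r^j) * x^(j+l) := by rw [pow_add, pow_add]; group
    | inv y hy ihy =>
      obtain ⟨i, j, rfl⟩ := ihy
      refine ⟨(6*i) * r ^ (2*j), 2*j, ?_⟩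
      have hxinv : (x ^ j)⁻¹ = x ^ (2*j) := by
        apply inv_eq_of_mul_eq_one_right
        rw [← pow_add, show j + 2*j = 3*j by ring, pow_mul, hx3, one_pow]
      have hAinv : (A ^ i)⁻¹ = A ^ (6*i) := by
        apply inv_eq_of_mul_eq_one_right
        rw [← pow_add, show i + 6*i = 7*i by ring, pow_mul, hA7, one_pow]
      rw [mul_inv_rev, hxinv, hAinv, hswap]
  have hmap : K.map SLtoPGL3 = φ.range := by
    rw [hKdef, MonoidHom.map_closure]
    rw [show SLtoPGL3 '' {A, x} = ({φ a, φ b} : Set PGL3C) by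
      rw [Set.image_insert_eq, Set.image_singleton, hπA, hx]]
    rw [show ({φ a, φ b} : Set PGL3C) = ⇑φ '' {a, b} by
      rw [Set.image_insert_eq, Set.image_singleton]]
    rw [← MonoidHom.map_closure, hcl, ← MonoidHom.range_eq_map]
  have hsurjT : Function.Surjective
      (fun p : Fin 7 × Fin 3 => (⟨A ^ (p.1 : ℕ) * x ^ (p.2 : ℕ),
        mul_mem (pow_mem hAK _) (pow_mem hxK _)⟩ : K)) := by
    rintro ⟨g, hg⟩
    obtain ⟨i, j, rfl⟩ := hT g hg
    refine ⟨(⟨i % 7, Nat.mod_lt _ (by norm_num)⟩, ⟨j % 3, Nat.mod_lt _ (by norm_num)⟩), ?_⟩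
    apply Subtype.coe_injective
    show A ^ (i % 7) * x ^ (j % 3) = A ^ i * x ^ j
    rw [← pow_mod_helper hA7, ← pow_mod_helper hx3]
  have hKfin : Finite K := Finite.of_surjective _ hsurjT
  have hcount : Nat.card K ≤ 21 := by
    calc Nat.card K ≤ Nat.card (Fin 7 × Fin 3) := Nat.card_le_card_of_surjective _ hsurjT
      _ = 21 := by simp
  have hr21 : Nat.card φ.range = 21 := by
    rw [← hcard]
    exact Nat.card_range_of_injective hφ
  have hmem' : ∀ k : K, SLtoPGL3 (k : Matrix.SpecialLinearGroup (Fin 3) ℂ) ∈ φ.range := by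
    intro k
    rw [← hmap]
    exact ⟨(k : Matrix.SpecialLinearGroup (Fin 3) ℂ), k.2, rfl⟩
  set f' : K →* φ.range := (SLtoPGL3.comp K.subtype).codRestrict φ.range hmem' with hf'def
  have hf'surj : Function.Surjective f' := by
    rintro ⟨y, hy⟩
    rw [← hmap] at hy
    obtain ⟨g, hgK, hgy⟩ := hy
    exact ⟨⟨g, hgK⟩, Subtype.coe_injective hgy⟩
  have hKcard : Nat.card K = 21 := by
    refine le_antisymm hcount ?_
    rw [← hr21]
    exact Nat.card_le_card_of_surjective f' hf'surj
  have hbij : Function.Bijective f' :=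
    (Nat.bijective_iff_surjective_and_card f').mpr ⟨hf'surj, by rw [hKcard, hr21]⟩
  set e := MulEquiv.ofBijective f' hbij with hedef
  have hφinj' : Function.Injective φ.rangeRestrict := by
    intro h1 h2 hh
    exact hφ (congrArg Subtype.val hh)
  set φ' := MulEquiv.ofBijective φ.rangeRestrict
    ⟨hφinj', MonoidHom.rangeRestrict_surjective φ⟩ with hφ'def
  refine ⟨K.subtype.comp ((e.symm.toMonoidHom).comp φ'.toMonoidHom), ?_, ?_⟩
  · intro h1 h2 hh
    exact φ'.injective (e.symm.injective (Subtype.coe_injective hh))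
  · ext h
    show SLtoPGL3 ((K.subtype) (e.symm (φ' h))) = φ h
    have h1 : SLtoPGL3 ((K.subtype) (e.symm (φ' h))) = (f' (e.symm (φ' h)) : PGL3C) := rfl
    rw [h1]
    have h2 : f' (e.symm (φ' h)) = φ' h := e.apply_symm_apply (φ' h)
    rw [h2]
    rfl

end Main
end

section
/- Any two subgroups of order 21 of PSL(2,𝔽₇) are conjugate in PSL(2,𝔽₇). -/
/-- PSL(2,𝔽₇): the quotient of SL(2,ℤ/7ℤ) by its center. -/
abbrev PSL2F7 :=
  Matrix.SpecialLinearGroup (Fin 2) (ZMod 7) ⧸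
    Subgroup.center (Matrix.SpecialLinearGroup (Fin 2) (ZMod 7))

namespace PSL2F7Aux

abbrev SL2 := Matrix.SpecialLinearGroup (Fin 2) (ZMod 7)

instance : DecidableEq SL2 := fun A B => decidable_of_iff (A.1 = B.1) Subtype.ext_iff.symm

theorem center_iff (A : SL2) : A ∈ Subgroup.center SL2 ↔ (A = 1 ∨ A = -1) := by
  rw [Matrix.SpecialLinearGroup.mem_center_iff]
  constructor
  · rintro ⟨r, hr, hA⟩
    simp only [Fintype.card_fin] at hr
    have hr2 : r = 1 ∨ r = -1 := by
      have : ∀ s : ZMod 7, s ^ 2 = 1 → s = 1 ∨ s = -1 := by decide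
      exact this r hr
    rcases hr2 with rfl | rfl
    · left; apply Subtype.ext; rw [← hA]; simp
    · right; apply Subtype.ext
      rw [← hA, Matrix.SpecialLinearGroup.coe_neg, Matrix.SpecialLinearGroup.coe_one]; decide
  · rintro (rfl | rfl)
    · exact ⟨1, by simp, by simp⟩
    · refine ⟨-1, by decide, ?_⟩
      rw [Matrix.SpecialLinearGroup.coe_neg, Matrix.SpecialLinearGroup.coe_one]; decide

theorem center_eq : Subgroup.center SL2 = Subgroup.zpowers (-1 : SL2) := by
  ext A
  rw [center_iff, Subgroup.mem_zpowers_iff]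
  constructor
  · rintro (rfl | rfl)
    · exact ⟨2, by decide⟩
    · exact ⟨1, by decide⟩
  · rintro ⟨k, rfl⟩
    have h2 : ((-1 : SL2)) ^ (2 : ℤ) = 1 := by rw [zpow_two]; decide
    rcases Int.even_or_odd k with ⟨m, rfl⟩ | ⟨m, rfl⟩
    · left
      have : m + m = 2 * m := by ring
      rw [this, zpow_mul, h2, one_zpow]
    · right
      rw [zpow_add, zpow_mul, h2, one_zpow, zpow_one, one_mul]

instance : DecidableEq PSL2F7 :=
  @Quotient.decidableEq _ (QuotientGroup.leftRel (Subgroup.center SL2))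
    (fun x y => decidable_of_iff (x⁻¹ * y ∈ Subgroup.center SL2)
      (QuotientGroup.leftRel_apply).symm)

set_option maxRecDepth 100000 in
theorem cardSL : Nat.card SL2 = 336 := by rw [Nat.card_eq_fintype_card]; rfl

theorem cardCenter : Nat.card (Subgroup.center SL2) = 2 := by
  rw [center_eq, Nat.card_zpowers]
  have h1 : ((-1 : SL2)) ^ 2 = 1 := by decide
  have h2 : (-1 : SL2) ≠ 1 := by decide
  exact orderOf_eq_prime h1 h2

theorem cardPSL : Nat.card PSL2F7 = 168 := by
  have h := Subgroup.card_eq_card_quotient_mul_card_subgroup (Subgroup.center SL2)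
  rw [cardSL, cardCenter] at h
  show Nat.card (SL2 ⧸ Subgroup.center SL2) = 168
  omega

theorem fact168 : (Nat.card PSL2F7).factorization 7 = 1 := by
  rw [cardPSL, show (168 : ℕ) = 7 ^ 1 * 24 by norm_num,
    Nat.factorization_mul (by norm_num) (by norm_num)]
  rw [Nat.Prime.factorization_pow (by norm_num)]
  simp [Nat.factorization_eq_zero_of_not_dvd (by norm_num : ¬ (7:ℕ) ∣ 24)]

theorem fact21 : (21 : ℕ).factorization 7 = 1 := by
  rw [show (21 : ℕ) = 7 ^ 1 * 3 by norm_num,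
    Nat.factorization_mul (by norm_num) (by norm_num),
    Nat.Prime.factorization_pow (by norm_num)]
  simp [Nat.factorization_eq_zero_of_not_dvd (by norm_num : ¬ (7:ℕ) ∣ 3)]

set_option maxRecDepth 40000

def U : SL2 := ⟨!![1,1;0,1], by decide⟩
def W : SL2 := ⟨!![0,-1;1,0], by decide⟩

def u : PSL2F7 := QuotientGroup.mk U
def w : PSL2F7 := QuotientGroup.mk W

theorem order_u : orderOf u = 7 :=
  haveI : Fact (Nat.Prime 7) := ⟨by norm_num⟩
  orderOf_eq_prime (by decide) (by decide)

theorem conj_not_pow : ∀ j < 7, ¬ (u ^ j = w * u * w⁻¹) := by decide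

/-- The concrete Sylow 7-subgroup generated by `u`. -/
noncomputable def P₀ : Sylow 7 PSL2F7 :=
  haveI : Fact (Nat.Prime 7) := ⟨by norm_num⟩
  Sylow.ofCard (Subgroup.zpowers u) (by rw [Nat.card_zpowers, order_u, fact168, pow_one])

theorem not_subsingleton_sylow :
    haveI : Fact (Nat.Prime 7) := ⟨by norm_num⟩
    Nat.card (Sylow 7 PSL2F7) ≠ 1 := by
  haveI : Fact (Nat.Prime 7) := ⟨by norm_num⟩
  intro h
  have hsub : Subsingleton (Sylow 7 PSL2F7) := (Nat.card_eq_one_iff_unique.mp h).1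
  have hw : w • P₀ = P₀ := Subsingleton.elim _ _
  have hwn : w ∈ Subgroup.normalizer ((P₀ : Subgroup PSL2F7) : Set PSL2F7) := Sylow.smul_eq_iff_mem_normalizer.mp hw
  have hu : u ∈ (P₀ : Subgroup PSL2F7) := by
    show u ∈ ((Sylow.ofCard _ _ : Sylow 7 PSL2F7) : Subgroup PSL2F7)
    rw [Sylow.coe_ofCard]
    exact Subgroup.mem_zpowers u
  have hmem : w * u * w⁻¹ ∈ (P₀ : Subgroup PSL2F7) :=
    (Subgroup.mem_normalizer_iff.mp hwn u).mp hu
  have hmem' : w * u * w⁻¹ ∈ Subgroup.zpowers u := by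
    rwa [show ((P₀ : Subgroup PSL2F7)) = Subgroup.zpowers u from Sylow.coe_ofCard _ _] at hmem
  obtain ⟨k, hk⟩ := Subgroup.mem_zpowers_iff.mp hmem'
  rw [← zpow_mod_orderOf, order_u] at hk
  have h0 : (0 : ℤ) ≤ k % ((7:ℕ):ℤ) := Int.emod_nonneg k (by norm_num)
  have h7 : k % ((7:ℕ):ℤ) < 7 := Int.emod_lt_of_pos k (by norm_num)
  set j : ℕ := (k % ((7:ℕ):ℤ)).toNat with hj
  have hjk : (j : ℤ) = k % ((7:ℕ):ℤ) := Int.toNat_of_nonneg h0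
  have hj7 : j < 7 := by omega
  have : u ^ j = w * u * w⁻¹ := by
    rw [← hk, ← hjk, zpow_natCast]
  exact conj_not_pow j hj7 this

theorem key (K : Subgroup PSL2F7) (hK : Nat.card K = 21) (Q : Sylow 7 PSL2F7)
    (hle : (Q : Subgroup PSL2F7) ≤ K) : K = Subgroup.normalizer ((Q : Subgroup PSL2F7) : Set PSL2F7) := by
  haveI : Fact (Nat.Prime 7) := ⟨by norm_num⟩
  have hQcard : Nat.card (Q : Subgroup PSL2F7) = 7 := by
    rw [Sylow.card_eq_multiplicity, fact168, pow_one]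
  -- card of Q.subgroupOf K is 7
  have hsub : Nat.card ((Q : Subgroup PSL2F7).subgroupOf K) = 7 := by
    exact (Nat.card_congr (Subgroup.subgroupOfEquivOfLe hle).toEquiv).trans hQcard
  -- The Sylow subgroup of K
  let S : Sylow 7 K := Sylow.ofCard ((Q : Subgroup PSL2F7).subgroupOf K)
    (by rw [hsub, hK, fact21, pow_one])
  have hScoe : (S : Subgroup K) = (Q : Subgroup PSL2F7).subgroupOf K := Sylow.coe_ofCard _ _
  -- number of Sylow 7-subgroups of K is 1
  have hcard1 : Nat.card (Sylow 7 K) = 1 := by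
    have hdvd : Nat.card (Sylow 7 K) ∣ (S : Subgroup K).index := Sylow.card_dvd_index S
    have hidx : (S : Subgroup K).index = 3 := by
      have := Subgroup.index_mul_card (S : Subgroup K)
      rw [hScoe, hsub, hK] at this
      rw [hScoe]
      omega
    have hmod : Nat.card (Sylow 7 K) % 7 = 1 := card_sylow_modEq_one 7 K
    rw [hidx] at hdvd
    have hle3 : Nat.card (Sylow 7 K) ≤ 3 := Nat.le_of_dvd (by norm_num) hdvd
    have : ∀ m < 4, m ∣ 3 → m % 7 = 1 → m = 1 := by decide
    exact this _ (by omega) hdvd hmod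
  haveI hsing : Subsingleton (Sylow 7 K) := (Nat.card_eq_one_iff_unique.mp hcard1).1
  -- K ≤ normalizer Q
  have hKle : K ≤ Subgroup.normalizer ((Q : Subgroup PSL2F7) : Set PSL2F7) := by
    intro k hk
    have hknorm : (⟨k, hk⟩ : K) ∈ Subgroup.normalizer ((S : Subgroup K) : Set K) :=
      Sylow.smul_eq_iff_mem_normalizer.mp (Subsingleton.elim _ _)
    rw [Subgroup.mem_normalizer_iff] at hknorm
    rw [Subgroup.mem_normalizer_iff]
    intro h
    constructor
    · intro hh
      have hhK : h ∈ K := hle hh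
      have := (hknorm ⟨h, hhK⟩).mp (by rwa [hScoe, Subgroup.mem_subgroupOf])
      rw [hScoe, Subgroup.mem_subgroupOf] at this
      exact this
    · intro hh
      have hconjK : k * h * k⁻¹ ∈ K := hle hh
      have hhK : h ∈ K := by
        have : k⁻¹ * (k * h * k⁻¹) * k ∈ K := K.mul_mem (K.mul_mem (K.inv_mem hk) hconjK) hk
        simpa [mul_assoc] using this
      have := (hknorm ⟨h, hhK⟩).mpr (by rw [hScoe, Subgroup.mem_subgroupOf]; exact hh)
      rw [hScoe, Subgroup.mem_subgroupOf] at this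
      exact this
  -- number of Sylow 7-subgroups of G is 8
  have hm8 : Nat.card (Sylow 7 PSL2F7) = 8 := by
    have hdvd : Nat.card (Sylow 7 PSL2F7) ∣ (Q : Subgroup PSL2F7).index :=
      Sylow.card_dvd_index Q
    have hidx : (Q : Subgroup PSL2F7).index = 24 := by
      have := Subgroup.index_mul_card (Q : Subgroup PSL2F7)
      rw [hQcard, cardPSL] at this
      omega
    rw [hidx] at hdvd
    have hmod : Nat.card (Sylow 7 PSL2F7) % 7 = 1 := card_sylow_modEq_one 7 PSL2F7
    have hle24 : Nat.card (Sylow 7 PSL2F7) ≤ 24 := Nat.le_of_dvd (by norm_num) hdvd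
    have : ∀ m < 25, m ∣ 24 → m % 7 = 1 → m = 1 ∨ m = 8 := by decide
    rcases this _ (by omega) hdvd hmod with h1 | h8
    · exact absurd h1 not_subsingleton_sylow
    · exact h8
  -- normalizer has cardinality 21
  have hNcard : Nat.card (Subgroup.normalizer ((Q : Subgroup PSL2F7) : Set PSL2F7)) = 21 := by
    have hidx : (Subgroup.normalizer ((Q : Subgroup PSL2F7) : Set PSL2F7)).index = 8 := by
      exact (Sylow.card_eq_index_normalizer Q).symm.trans hm8
    have := Subgroup.index_mul_card (Subgroup.normalizer ((Q : Subgroup PSL2F7) : Set PSL2F7))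
    rw [hidx, cardPSL] at this
    omega
  exact Subgroup.eq_of_le_of_card_ge hKle (by rw [hNcard, hK])

theorem exists_sylow_le (K : Subgroup PSL2F7) (hK : Nat.card K = 21) :
    ∃ S : Sylow 7 PSL2F7, (S : Subgroup PSL2F7) ≤ K := by
  haveI : Fact (Nat.Prime 7) := ⟨by norm_num⟩
  obtain ⟨R, hR⟩ := Sylow.exists_subgroup_card_pow_prime (G := K) 7 (n := 1)
    (by rw [pow_one, hK]; norm_num)
  rw [pow_one] at hR
  refine ⟨Sylow.ofCard (R.map K.subtype) ?_, ?_⟩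
  · rw [fact168, pow_one]
    exact ((Nat.card_congr
      (Subgroup.equivMapOfInjective R K.subtype K.subtype_injective).toEquiv).symm).trans hR
  · rw [Sylow.coe_ofCard]
    simpa using Subgroup.map_subtype_le R

end PSL2F7Aux

open PSL2F7Aux in
/-- Any two subgroups of order 21 of PSL(2,𝔽₇) are conjugate. -/
theorem subgroups_of_order_21_conjugate (K₁ K₂ : Subgroup PSL2F7)
    (h₁ : Nat.card K₁ = 21) (h₂ : Nat.card K₂ = 21) :
    ∃ g : PSL2F7, Subgroup.map (MulAut.conj g).toMonoidHom K₁ = K₂ := by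
  haveI : Fact (Nat.Prime 7) := ⟨by norm_num⟩
  obtain ⟨S₁, hS₁⟩ := exists_sylow_le K₁ h₁
  obtain ⟨S₂, hS₂⟩ := exists_sylow_le K₂ h₂
  have e₁ := key K₁ h₁ S₁ hS₁
  have e₂ := key K₂ h₂ S₂ hS₂
  obtain ⟨g, hg⟩ := MulAction.exists_smul_eq PSL2F7 S₁ S₂
  refine ⟨g, ?_⟩
  rw [e₁, e₂,
    Subgroup.map_normalizer_eq_of_bijective _ (MulAut.conj g).bijective]
  congr 1
  have : ((g • S₁ : Sylow 7 PSL2F7) : Subgroup PSL2F7)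
      = Subgroup.map (MulAut.conj g).toMonoidHom (S₁ : Subgroup PSL2F7) := rfl
  rw [← this, hg]
end
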